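/- arXiv:1609.01969 — 4 statements merged into one kernel-verified Lean document; each statement's English description precedes it below -/
import Mathlib

section
/- Let A be a group acting by automorphisms on the finite group G, and suppose G is A-simple. Then there exist nonabelian simple subgroups K₁, …, K_n of G such that G is the internal direct product of K₁, …, K_n (they pairwise commute elementwise, generate G, and each meets the product of the others trivially) and A permutes the set {K₁, …, K_n} transitively (for all i, j there is a ∈ A with a(K_i) = K_j). -/
open Pointwise

/-- `G` is *`A`-simple* (with `A` acting via `φ : A →* MulAut G`) if `G` is nonabelian
and the only `A`-invariant normal subgroups of `G` are `1` and `G`. -/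
def IsMulASimple {A G : Type*} [Group A] [Group G] (φ : A →* MulAut G) : Prop :=
  (¬ ∀ x y : G, Commute x y) ∧
    ∀ N : Subgroup G, N.Normal → (∀ a : A, φ a • N = N) → N = ⊥ ∨ N = ⊤

/-- The homomorphism `MulAut G →* MulAut (G ⧸ Z(G))` induced by passing to the
quotient by the center (which is characteristic). -/
def centerQuotHom (G : Type*) [Group G] :
    MulAut G →* MulAut (G ⧸ Subgroup.center G) where
  toFun e := QuotientGroup.congr (Subgroup.center G) (Subgroup.center G) e
      (Subgroup.characteristic_iff_map_eq.mp inferInstance e)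
  map_one' := by
    ext x
    induction x using QuotientGroup.induction_on with
    | H x => rfl
  map_mul' e f := by
    ext x
    induction x using QuotientGroup.induction_on with
    | H x => rfl

/-- `G` is *`A`-quasisimple* (with `A` acting via `φ`) if `G` is perfect and
`G/Z(G)` is `A`-simple with respect to the induced action. -/
def IsAQuasisimple {A G : Type*} [Group A] [Group G] (φ : A →* MulAut G) : Prop :=
  commutator G = ⊤ ∧ IsMulASimple ((centerQuotHom G).comp φ)

section Helpers
variable {G : Type*} [Group G]

lemma aux_smul_normal (e : MulAut G) {H : Subgroup G} (h : H.Normal) : (e • H).Normal := by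
  constructor
  intro n hn g
  rw [Subgroup.mem_pointwise_smul_iff_inv_smul_mem] at hn ⊢
  have : e⁻¹ • (g * n * g⁻¹) = (e⁻¹ • g) * (e⁻¹ • n) * (e⁻¹ • g)⁻¹ := by
    simp [MulAut.smul_def, map_mul, map_inv]
  rw [this]
  exact h.conj_mem _ hn _

lemma aux_smul_iSup {ι : Sort*} (e : MulAut G) (H : ι → Subgroup G) :
    e • (⨆ i, H i) = ⨆ i, e • H i := by
  simp only [Subgroup.pointwise_smul_def]
  exact (Subgroup.gc_map_comap _).l_iSup

lemma aux_normal_iSup {ι : Sort*} (H : ι → Subgroup G) (h : ∀ i, (H i).Normal) :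
    (⨆ i, H i).Normal := by
  apply Subgroup.Normal.of_conjugate_fixed
  intro g
  rw [aux_smul_iSup]
  congr 1
  funext i
  exact (h i).conjAct _

lemma aux_normal_finsetSup (T : Finset (Subgroup G)) (h : ∀ L ∈ T, L.Normal) :
    (T.sup id).Normal := by
  refine Finset.sup_induction ?_ ?_ h
  · infer_instance
  · intro a ha b hb
    haveI := ha; haveI := hb
    infer_instance

lemma aux_commute_of_disjoint {M N : Subgroup G} (hM : M.Normal) (hN : N.Normal)
    (h : M ⊓ N = ⊥) : ∀ x ∈ M, ∀ y ∈ N, Commute x y := by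
  intro x hx y hy
  have h1 : x * y * x⁻¹ * y⁻¹ ∈ M := by
    have : x * y * x⁻¹ * y⁻¹ = x * (y * x⁻¹ * y⁻¹) := by group
    rw [this]
    exact M.mul_mem hx (hM.conj_mem _ (M.inv_mem hx) _)
  have h2 : x * y * x⁻¹ * y⁻¹ ∈ N := N.mul_mem (hN.conj_mem _ hy _) (N.inv_mem hy)
  have h0 : x * y * x⁻¹ * y⁻¹ = 1 := by
    have := h ▸ (Subgroup.mem_inf.mpr ⟨h1, h2⟩)
    simpa using this
  have h3 : x * y = y * x := by
    have := mul_eq_one_iff_eq_inv.mp h0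
    simp only [mul_inv_rev, inv_inv] at this
    calc x * y = x * y * x⁻¹ * x := by group
    _ = y * x := by rw [this]
  exact h3

end Helpers

theorem isMulASimple_internal_direct_product'
    {A G : Type*} [Group A] [Group G] [Finite G] (φ : A →* MulAut G)
    (hG : (¬ ∀ x y : G, Commute x y) ∧
    ∀ N : Subgroup G, N.Normal → (∀ a : A, φ a • N = N) → N = ⊥ ∨ N = ⊤) :
    ∃ (n : ℕ) (K : Fin n → Subgroup G),
      (∀ i, IsSimpleGroup ↥(K i)) ∧
      (∀ i, ¬ ∀ x y : ↥(K i), Commute x y) ∧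
      (∀ i j, i ≠ j → ∀ x ∈ K i, ∀ y ∈ K j, Commute x y) ∧
      (⨆ i, K i) = ⊤ ∧
      (∀ i, K i ⊓ (⨆ j, ⨆ _ : j ≠ i, K j) = ⊥) ∧
      (∀ (a : A) (i : Fin n), ∃ j, φ a • K i = K j) ∧
      (∀ i j, ∃ a : A, φ a • K i = K j) := by
  obtain ⟨hnab, hsimp⟩ := hG
  haveI : Nontrivial G := by
    by_contra h
    rw [not_nontrivial_iff_subsingleton] at h
    exact hnab fun x y => Subsingleton.elim _ _
  haveI : Finite (Subgroup G) := Finite.of_injective _ SetLike.coe_injective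
  haveI : DecidableEq (Subgroup G) := Classical.decEq _
  haveI : Finite (Finset (Subgroup G)) := Finite.of_injective _ Finset.coe_injective
  -- a minimal normal subgroup K₀
  obtain ⟨K₀, ⟨hK₀n, hK₀ne⟩, hm⟩ :=
    (Finite.to_wellFoundedLT (α := Subgroup G)).wf.has_min
      {N : Subgroup G | N.Normal ∧ N ≠ ⊥} ⟨⊤, inferInstance, bot_lt_top.ne'⟩
  have hmin : ∀ N : Subgroup G, N.Normal → N ≠ ⊥ → N ≤ K₀ → N = K₀ := by
    intro N h1 h2 hle
    exact hle.lt_or_eq.resolve_left (hm N ⟨h1, h2⟩)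
  -- basic facts about the orbit members φ a • K₀
  have hSnormal : ∀ a : A, (φ a • K₀).Normal := fun a => aux_smul_normal _ hK₀n
  have hSne : ∀ a : A, φ a • K₀ ≠ ⊥ := by
    intro a h
    apply hK₀ne
    have := congrArg (fun H : Subgroup G => (φ a)⁻¹ • H) h
    simpa [inv_smul_smul] using this
  have hSmin : ∀ (a : A) (N : Subgroup G), N.Normal → N ≠ ⊥ → N ≤ φ a • K₀ →
      N = φ a • K₀ := by
    intro a N h1 h2 hle
    have hle' : (φ a)⁻¹ • N ≤ K₀ := by
      have h : (φ a)⁻¹ • N ≤ (φ a)⁻¹ • (φ a • K₀) :=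
        Subgroup.pointwise_smul_le_pointwise_smul_iff.mpr hle
      simpa [inv_smul_smul] using h
    have h1' : ((φ a)⁻¹ • N).Normal := aux_smul_normal _ h1
    have h2' : (φ a)⁻¹ • N ≠ ⊥ := by
      intro h
      apply h2
      have := congrArg (fun H : Subgroup G => (φ a) • H) h
      simpa [smul_inv_smul] using this
    have := hmin _ h1' h2' hle'
    have := congrArg (fun H : Subgroup G => (φ a) • H) this
    simpa [smul_inv_smul] using this
  have hdisj : ∀ a b : A, φ a • K₀ ≠ φ b • K₀ → (φ a • K₀) ⊓ (φ b • K₀) = ⊥ := by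
    intro a b hne
    by_contra h
    have hP : ((φ a • K₀) ⊓ (φ b • K₀)).Normal := by
      constructor
      intro n hn g
      rw [Subgroup.mem_inf] at hn ⊢
      exact ⟨(hSnormal a).conj_mem _ hn.1 g, (hSnormal b).conj_mem _ hn.2 g⟩
    have h1 := hSmin a _ hP h inf_le_left
    have h2 := hSmin b _ hP h inf_le_right
    exact hne (h1.symm.trans h2)
  have hcomm' : ∀ a b : A, φ a • K₀ ≠ φ b • K₀ →
      ∀ x ∈ φ a • K₀, ∀ y ∈ φ b • K₀, Commute x y := by
    intro a b hne
    exact aux_commute_of_disjoint (hSnormal a) (hSnormal b) (hdisj a b hne)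
  -- the join of the orbit is all of G
  have hJinv : ∀ b : A, φ b • (⨆ a : A, φ a • K₀) = ⨆ a : A, φ a • K₀ := by
    intro b
    rw [aux_smul_iSup]
    apply le_antisymm
    · apply iSup_le
      intro a
      rw [smul_smul, ← map_mul]
      exact le_iSup (fun c : A => φ c • K₀) (b * a)
    · apply iSup_le
      intro c
      have : φ c • K₀ = φ b • (φ (b⁻¹ * c) • K₀) := by
        rw [smul_smul, ← map_mul, mul_inv_cancel_left]
      rw [this]
      exact le_iSup (fun a : A => φ b • (φ a • K₀)) (b⁻¹ * c)
  have hJtop : (⨆ a : A, φ a • K₀) = ⊤ := by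
    refine (hsimp _ (aux_normal_iSup _ hSnormal) hJinv).resolve_left ?_
    intro h
    apply hK₀ne
    have h1 : K₀ ≤ ⨆ a : A, φ a • K₀ := by
      calc K₀ = φ 1 • K₀ := by simp
      _ ≤ _ := le_iSup (fun a : A => φ a • K₀) 1
    exact le_bot_iff.mp (h ▸ h1)
  -- K₀ is nonabelian
  have habK : ¬ ∀ x ∈ K₀, ∀ y ∈ K₀, Commute x y := by
    intro hab
    apply hnab
    have habM : ∀ a : A, ∀ x ∈ φ a • K₀, ∀ y ∈ φ a • K₀, Commute x y := by
      intro a x hx y hy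
      rw [Subgroup.mem_pointwise_smul_iff_inv_smul_mem] at hx hy
      have h1 := hab _ hx _ hy
      have h2 := h1.map (φ a).toMonoidHom
      simpa [MulAut.smul_def] using h2
    have key : ∀ x ∈ (⨆ a : A, φ a • K₀), ∀ y ∈ (⨆ a : A, φ a • K₀), Commute x y := by
      intro x hx
      refine Subgroup.iSup_induction (C := fun x => ∀ y ∈ (⨆ a : A, φ a • K₀), Commute x y)
        _ hx ?_ ?_ ?_
      · intro a x hxa y hy
        refine Subgroup.iSup_induction (C := fun y => Commute x y) _ hy ?_ ?_ ?_
        · intro b y hyb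
          by_cases h : φ a • K₀ = φ b • K₀
          · exact habM a x hxa y (h ▸ hyb)
          · exact hcomm' a b h x hxa y hyb
        · exact Commute.one_right x
        · intro y z h1 h2
          exact h1.mul_right h2
      · intro y _
        exact Commute.one_left y
      · intro x z h1 h2 y hy
        exact (h1 y hy).mul_left (h2 y hy)
    intro x y
    exact key x (hJtop ▸ Subgroup.mem_top x) y (hJtop ▸ Subgroup.mem_top y)
  have habM : ∀ a : A, ¬ ∀ x ∈ φ a • K₀, ∀ y ∈ φ a • K₀, Commute x y := by
    intro a hab
    apply habK
    intro x hx y hy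
    have h1 := hab _ (Subgroup.smul_mem_pointwise_smul x _ _ hx)
      _ (Subgroup.smul_mem_pointwise_smul y _ _ hy)
    have h2 := h1.map (φ a).symm.toMonoidHom
    simpa [MulAut.smul_def] using h2
  -- a maximal independent family inside the orbit
  have h𝒮ne : ({K₀} : Finset (Subgroup G)) ∈
      {T : Finset (Subgroup G) | (∀ L ∈ T, ∃ a : A, φ a • K₀ = L) ∧
        ∀ L ∈ T, L ⊓ (T.erase L).sup id = ⊥} := by
    constructor
    · intro L hL
      rw [Finset.mem_singleton] at hL
      exact ⟨1, by simp [hL]⟩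
    · intro L hL
      rw [Finset.mem_singleton] at hL
      subst hL
      simp
  obtain ⟨T, ⟨hTS, hTind⟩, hTmax⟩ :=
    Set.Finite.exists_maximalFor Finset.card
      {T : Finset (Subgroup G) | (∀ L ∈ T, ∃ a : A, φ a • K₀ = L) ∧
        ∀ L ∈ T, L ⊓ (T.erase L).sup id = ⊥} (Set.toFinite _) ⟨_, h𝒮ne⟩
  have hTnormal : ∀ L ∈ T, L.Normal := by
    intro L hL
    obtain ⟨a, rfl⟩ := hTS L hL
    exact hSnormal a
  have hJTnormal : (T.sup id).Normal := aux_normal_finsetSup T hTnormal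
  -- the family generates G
  have htop : T.sup id = ⊤ := by
    by_contra hne
    have hex : ∃ a : A, ¬ φ a • K₀ ≤ T.sup id := by
      by_contra h
      push_neg at h
      exact hne (top_le_iff.mp (hJtop ▸ iSup_le h))
    obtain ⟨a, ha⟩ := hex
    have hMJ : (φ a • K₀) ⊓ T.sup id = ⊥ := by
      by_contra h
      have hP : ((φ a • K₀) ⊓ T.sup id).Normal := by
        constructor
        intro n hn g
        rw [Subgroup.mem_inf] at hn ⊢
        exact ⟨(hSnormal a).conj_mem _ hn.1 g, hJTnormal.conj_mem _ hn.2 g⟩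
      have := hSmin a _ hP h inf_le_left
      exact ha (inf_eq_left.mp this)
    have hMT : φ a • K₀ ∉ T := fun h => ha (Finset.le_sup (f := id) h)
    have hT' : insert (φ a • K₀) T ∈
        {T : Finset (Subgroup G) | (∀ L ∈ T, ∃ a : A, φ a • K₀ = L) ∧
          ∀ L ∈ T, L ⊓ (T.erase L).sup id = ⊥} := by
      constructor
      · intro L hL
        rcases Finset.mem_insert.mp hL with rfl | hL
        · exact ⟨a, rfl⟩
        · exact hTS L hL
      · intro L hL
        rcases Finset.mem_insert.mp hL with rfl | hL
        · rw [Finset.erase_insert hMT]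
          exact hMJ
        · have hLM : L ≠ φ a • K₀ := fun h => hMT (h ▸ hL)
          rw [Finset.erase_insert_of_ne hLM.symm, Finset.sup_insert]
          have hLJ' : L ⊓ (T.erase L).sup id = ⊥ := hTind L hL
          haveI hMn : (φ a • K₀).Normal := hSnormal a
          rw [eq_bot_iff]
          intro x hx
          rw [Subgroup.mem_inf] at hx
          obtain ⟨hxL, hxMJ⟩ := hx
          have hxmem : (x : G) ∈ ((φ a • K₀ : Subgroup G) : Set G) * (((T.erase L).sup id : Subgroup G) : Set G) := by
            rw [← Subgroup.normal_mul]
            exact hxMJ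
          obtain ⟨m, hm, j, hj, hmj⟩ := hxmem
          have hjT : j ∈ T.sup id :=
            (Finset.sup_mono (Finset.erase_subset L T) : (T.erase L).sup id ≤ T.sup id) hj
          have hmm : m ∈ (φ a • K₀) ⊓ T.sup id := by
            refine ⟨hm, ?_⟩
            have hmeq : m = x * j⁻¹ := by rw [← hmj]; group
            rw [hmeq]
            exact (T.sup id).mul_mem (Finset.le_sup (f := id) hL hxL)
              ((T.sup id).inv_mem hjT)
          have hm1 : m = 1 := by
            rw [hMJ] at hmm
            simpa using hmm
          have hxj : x = j := by
            subst hm1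
            simpa using hmj.symm
          have : x ∈ L ⊓ (T.erase L).sup id := ⟨hxL, hxj ▸ hj⟩
          rw [hLJ'] at this
          simpa using this
    have hcard := hTmax hT' (Finset.card_le_card (Finset.subset_insert _ _))
    rw [Finset.card_insert_of_notMem hMT] at hcard
    omega
  have hsupT : (⨆ L : ↥T, (L : Subgroup G)) = ⊤ := by
    rw [← htop]
    apply le_antisymm
    · exact iSup_le fun L => Finset.le_sup (f := id) L.2
    · exact Finset.sup_le fun L hL => le_iSup (fun L : ↥T => (L : Subgroup G)) ⟨L, hL⟩
  -- every orbit member belongs to T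
  have hST : ∀ a : A, φ a • K₀ ∈ T := by
    intro a
    by_contra hM
    apply habM a
    have hcen : ∀ x ∈ φ a • K₀, ∀ g : G, g * x = x * g := by
      intro x hx g
      have hg : g ∈ ⨆ L : ↥T, (L : Subgroup G) := hsupT ▸ Subgroup.mem_top g
      refine Subgroup.iSup_induction (C := fun g => g * x = x * g) _ hg ?_ ?_ ?_
      · rintro ⟨L, hL⟩ g hgL
        obtain ⟨b, rfl⟩ := hTS L hL
        have hne : φ b • K₀ ≠ φ a • K₀ := fun h => hM (h ▸ hL)
        exact hcomm' b a hne g hgL x hx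
      · show (1:G) * x = x * 1
        rw [one_mul, mul_one]
      · intro g h h1 h2
        rw [mul_assoc, h2, ← mul_assoc, h1, mul_assoc]
    intro x hx y hy
    exact hcen y hy x
  -- each member of T is simple
  have hsimple : ∀ L ∈ T, IsSimpleGroup ↥L := by
    intro L hL
    obtain ⟨a, ha⟩ := hTS L hL
    haveI hnt : Nontrivial ↥L := (Subgroup.nontrivial_iff_ne_bot L).mpr (ha ▸ hSne a)
    constructor
    intro N hN
    have hN'le : N.map L.subtype ≤ L := Subgroup.map_subtype_le N
    have hN'normal : (N.map L.subtype).Normal := by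
      constructor
      intro n hn g
      have key : ∀ g ∈ (⨆ L' : ↥T, (L' : Subgroup G)),
          ∀ n ∈ N.map L.subtype, g * n * g⁻¹ ∈ N.map L.subtype := by
        intro g hg
        refine Subgroup.iSup_induction
          (C := fun g => ∀ n ∈ N.map L.subtype, g * n * g⁻¹ ∈ N.map L.subtype) _ hg ?_ ?_ ?_
        · rintro ⟨L', hL'⟩ g hgL' n hn
          by_cases hLL : L' = L
          · subst hLL
            obtain ⟨m, hm, rfl⟩ := hn
            refine ⟨⟨g, hgL'⟩ * m * ⟨g, hgL'⟩⁻¹, hN.conj_mem m hm ⟨g, hgL'⟩, ?_⟩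
            simp [Subgroup.coe_mul]
          · obtain ⟨b, rfl⟩ := hTS L' hL'
            obtain ⟨c, hc⟩ := hTS L hL
            have hne : φ b • K₀ ≠ φ c • K₀ := by
              rw [hc]; exact hLL
            have hcm : Commute g n := hcomm' b c hne g hgL' n (hc ▸ hN'le hn)
            have : g * n * g⁻¹ = n := by
              rw [hcm.eq, mul_assoc, mul_inv_cancel, mul_one]
            rw [this]
            exact hn
        · intro n hn
          simpa using hn
        · intro g h h1 h2 n hn
          have : g * h * n * (g * h)⁻¹ = g * (h * n * h⁻¹) * g⁻¹ := by group
          rw [this]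
          exact h1 _ (h2 n hn)
      exact key g (hsupT ▸ Subgroup.mem_top g) n hn
    by_cases hbot : N.map L.subtype = ⊥
    · left
      apply Subgroup.map_injective L.subtype_injective
      rw [hbot, Subgroup.map_bot]
    · right
      have := hSmin a _ hN'normal hbot (ha ▸ hN'le)
      rw [ha] at this
      apply Subgroup.map_injective L.subtype_injective
      rw [this, ← MonoidHom.range_eq_map, L.range_subtype]
  -- assemble the answer
  set K : Fin T.card → Subgroup G := fun i => ↑(T.equivFin.symm i) with hK
  have hKmem : ∀ i, K i ∈ T := fun i => (T.equivFin.symm i).2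
  have hKsurj : ∀ L ∈ T, ∃ i, K i = L := fun L hL => ⟨T.equivFin ⟨L, hL⟩, by simp [hK]⟩
  have hKinj : ∀ i j, K i = K j → i = j := fun i j h =>
    T.equivFin.symm.injective (Subtype.ext h)
  refine ⟨T.card, K, ?_, ?_, ?_, ?_, ?_, ?_, ?_⟩
  · exact fun i => hsimple _ (hKmem i)
  · intro i h
    obtain ⟨a, ha⟩ := hTS (K i) (hKmem i)
    apply habM a
    intro x hx y hy
    have hx' : x ∈ K i := ha ▸ hx
    have hy' : y ∈ K i := ha ▸ hy
    have h2 := congrArg (Subtype.val) (h ⟨x, hx'⟩ ⟨y, hy'⟩)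
    exact (by simpa using h2 : x * y = y * x)
  · intro i j hij x hx y hy
    have hne : K i ≠ K j := fun h => hij (hKinj i j h)
    obtain ⟨a, ha⟩ := hTS (K i) (hKmem i)
    obtain ⟨b, hb⟩ := hTS (K j) (hKmem j)
    refine hcomm' a b ?_ x (ha ▸ hx) y (hb ▸ hy)
    rw [ha, hb]
    exact hne
  · have h1 : T.sup id ≤ ⨆ i, K i := Finset.sup_le fun L hL => by
      obtain ⟨i, rfl⟩ := hKsurj L hL
      exact le_iSup K i
    rw [htop] at h1
    exact le_antisymm le_top h1
  · intro i
    have h1 : (⨆ j, ⨆ _ : j ≠ i, K j) ≤ (T.erase (K i)).sup id := by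
      refine iSup_le fun j => iSup_le fun hj => ?_
      exact Finset.le_sup (f := id) (Finset.mem_erase.mpr ⟨fun h => hj (hKinj j i h), hKmem j⟩)
    rw [eq_bot_iff]
    calc K i ⊓ (⨆ j, ⨆ _ : j ≠ i, K j) ≤ K i ⊓ (T.erase (K i)).sup id :=
      inf_le_inf_left _ h1
    _ ≤ ⊥ := le_of_eq (hTind _ (hKmem i))
  · intro a i
    obtain ⟨b, hb⟩ := hTS (K i) (hKmem i)
    obtain ⟨j, hj⟩ := hKsurj (φ (a * b) • K₀) (hST (a * b))
    refine ⟨j, ?_⟩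
    rw [← hb, hj, smul_smul, ← map_mul]
  · intro i j
    obtain ⟨b, hb⟩ := hTS (K i) (hKmem i)
    obtain ⟨c, hc⟩ := hTS (K j) (hKmem j)
    refine ⟨c * b⁻¹, ?_⟩
    rw [← hb, ← hc, smul_smul, ← map_mul, inv_mul_cancel_right]


/-- If a group `A` acts by automorphisms on a finite group `G` and
`G` is `A`-simple, then `G` is the internal direct product of nonabelian simple
subgroups `K₁, …, K_n` that are permuted transitively by `A`. -/
theorem isMulASimple_internal_direct_product
    {A G : Type*} [Group A] [Group G] [Finite G] (φ : A →* MulAut G)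
    (hG : IsMulASimple φ) :
    ∃ (n : ℕ) (K : Fin n → Subgroup G),
      (∀ i, IsSimpleGroup ↥(K i)) ∧
      (∀ i, ¬ ∀ x y : ↥(K i), Commute x y) ∧
      (∀ i j, i ≠ j → ∀ x ∈ K i, ∀ y ∈ K j, Commute x y) ∧
      (⨆ i, K i) = ⊤ ∧
      (∀ i, K i ⊓ (⨆ j, ⨆ _ : j ≠ i, K j) = ⊥) ∧
      (∀ (a : A) (i : Fin n), ∃ j, φ a • K i = K j) ∧
      (∀ i j, ∃ a : A, φ a • K i = K j) := by
  exact isMulASimple_internal_direct_product' φ hG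
end

section
/- Let A be a group acting by automorphisms on the finite group G. Then G is A-quasisimple if and only if G is nontrivial, G = E(G), and A acts transitively on the set of components of G (for any two components K and L of G there exists a ∈ A with a(K) = L). -/
open Pointwise

/-- A subgroup `H` of `G` is *subnormal* if there is a finite chain
`H = c 0 ⊴ c 1 ⊴ ⋯ ⊴ c n = G` with each term normal in the next. -/
def IsSubnormal {G : Type*} [Group G] (H : Subgroup G) : Prop :=
  ∃ (n : ℕ) (c : ℕ → Subgroup G), c 0 = H ∧ c n = ⊤ ∧
    ∀ i < n, c i ≤ c (i + 1) ∧ ((c i).subgroupOf (c (i + 1))).Normal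

/-- A group is *quasisimple* if it is perfect and its quotient by its center is simple. -/
def IsQuasisimpleGroup (Q : Type*) [Group Q] : Prop :=
  commutator Q = ⊤ ∧ IsSimpleGroup (Q ⧸ Subgroup.center Q)

/-- A *component* of `G` is a quasisimple subnormal subgroup. -/
def IsComponent {G : Type*} [Group G] (K : Subgroup G) : Prop :=
  IsSubnormal K ∧ IsQuasisimpleGroup ↥K

/-- The *layer* `E(G)`: the subgroup generated by all components of `G`. -/
def layer (G : Type*) [Group G] : Subgroup G :=
  sSup {K : Subgroup G | IsComponent K}

/-- `Sol(G)`: the join of all solvable normal subgroups of `G`. -/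
def solRadical (G : Type*) [Group G] : Subgroup G :=
  sSup {N : Subgroup G | N.Normal ∧ IsSolvable ↥N}

instance solRadical_normal (G : Type*) [Group G] : (solRadical G).Normal := by
  constructor
  intro n hn g
  have h : solRadical G ≤ (solRadical G).comap (MulAut.conj g).toMonoidHom := by
    apply sSup_le
    intro N hN x hx
    have hmem : g * x * g⁻¹ ∈ N := hN.1.conj_mem x hx g
    exact Subgroup.mem_comap.mpr
      (le_sSup hN (by simpa [MulAut.conj_apply] using hmem))
  simpa [MulAut.conj_apply] using h hn

/-- A *sol-component* of `G` is a perfect subnormal subgroup of `G` whose image in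
`G/Sol(G)` is a component of `G/Sol(G)`. -/
def IsSolComponent {G : Type*} [Group G] (K : Subgroup G) : Prop :=
  IsSubnormal K ∧ commutator ↥K = ⊤ ∧
    IsComponent (K.map (QuotientGroup.mk' (solRadical G)))

/-- `E_sol(G)`: the subgroup generated by all sol-components of `G`. -/
def solLayer (G : Type*) [Group G] : Subgroup G :=
  sSup {K : Subgroup G | IsSolComponent K}

open Pointwise
open scoped commutatorElement

section Aux

open Subgroup

variable {G : Type*} [Group G]

/-- Relative normality of `N` in `H` (as subgroups of an ambient group). -/
def RelNorm (N H : Subgroup G) : Prop :=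
  N ≤ H ∧ ∀ g ∈ H, ∀ x ∈ N, g * x * g⁻¹ ∈ N

theorem relNorm_self (H : Subgroup G) : RelNorm H H :=
  ⟨le_rfl, fun g hg x hx => mul_mem (mul_mem hg hx) (inv_mem hg)⟩

theorem relNorm_iff {N H : Subgroup G} :
    RelNorm N H ↔ N ≤ H ∧ (N.subgroupOf H).Normal := by
  constructor
  · rintro ⟨hle, hconj⟩
    refine ⟨hle, ⟨fun x hx g => ?_⟩⟩
    rw [mem_subgroupOf] at hx ⊢
    simpa using hconj g g.2 x hx
  · rintro ⟨hle, hnor⟩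
    refine ⟨hle, fun g hg x hx => ?_⟩
    have := hnor.conj_mem ⟨x, hle hx⟩ (by rwa [mem_subgroupOf]) ⟨g, hg⟩
    rw [mem_subgroupOf] at this
    simpa using this

theorem relNorm_top {N : Subgroup G} (h : N.Normal) : RelNorm N ⊤ :=
  ⟨le_top, fun g _ x hx => h.conj_mem x hx g⟩

theorem RelNorm.normal_of_top {N : Subgroup G} (h : RelNorm N ⊤) : N.Normal :=
  ⟨fun x hx g => h.2 g trivial x hx⟩

/-- Chains witnessing subnormality, with recursion at the top. -/
def SChain : ℕ → Subgroup G → Subgroup G → Prop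
  | 0, K, H => K = H
  | (n + 1), K, H => ∃ M, SChain n K M ∧ RelNorm M H

theorem SChain.le : ∀ {n : ℕ} {K H : Subgroup G}, SChain n K H → K ≤ H
  | 0, _, _, h => le_of_eq h
  | (_ + 1), _, _, ⟨_, h1, h2⟩ => h1.le.trans h2.1

theorem schain_cons_bot : ∀ {n : ℕ} {K M H : Subgroup G},
    RelNorm K M → SChain n M H → SChain (n + 1) K H
  | 0, K, M, H, h1, h2 => ⟨K, rfl, by rwa [show M = H from h2] at h1⟩
  | (n + 1), K, M, H, h1, h2 => by
    obtain ⟨M', hM'1, hM'2⟩ := h2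
    exact ⟨M', schain_cons_bot h1 hM'1, hM'2⟩

theorem schain_destruct_bot : ∀ {n : ℕ} {K H : Subgroup G},
    SChain (n + 1) K H → ∃ M, RelNorm K M ∧ SChain n M H
  | 0, K, H, ⟨M, hM1, hM2⟩ => by
    cases hM1
    exact ⟨H, hM2, rfl⟩
  | (n + 1), K, H, ⟨M', hM'1, hM'2⟩ => by
    obtain ⟨M, h1, h2⟩ := schain_destruct_bot hM'1
    exact ⟨M, h1, ⟨M', h2, hM'2⟩⟩

theorem schain_concat {m : ℕ} {K H : Subgroup G} (h1 : SChain m K H) :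
    ∀ {n : ℕ} {L : Subgroup G}, SChain n H L → SChain (n + m) K L := by
  intro n
  induction n with
  | zero => rintro L rfl; simpa using h1
  | succ n ih =>
    rintro L ⟨M, hM1, hM2⟩
    rw [Nat.succ_add]
    exact ⟨M, ih hM1, hM2⟩

theorem schain_inter : ∀ {n : ℕ} {K H : Subgroup G}, SChain n K H →
    ∀ {M : Subgroup G}, K ≤ M → M ≤ H → SChain n K M
  | 0, K, H, h, M, h1, h2 => le_antisymm h1 (h ▸ h2)
  | (n + 1), K, H, ⟨M', hM'1, hM'2⟩, M, h1, h2 => by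
    refine ⟨M' ⊓ M, schain_inter hM'1 (le_inf hM'1.le h1) inf_le_left, ?_, ?_⟩
    · exact inf_le_right
    · intro g hg x hx
      rw [Subgroup.mem_inf] at hx ⊢
      exact ⟨hM'2.2 g (h2 hg) x hx.1, mul_mem (mul_mem hg hx.2) (inv_mem hg)⟩

theorem isSubnormal_iff_schain {K : Subgroup G} :
    _root_.IsSubnormal K ↔ ∃ n, SChain n K ⊤ := by
  constructor
  · rintro ⟨n, c, h0, hn, hcond⟩
    refine ⟨n, ?_⟩
    subst h0
    rw [← hn]
    -- build SChain from a chain function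
    suffices h : ∀ (n : ℕ) (c : ℕ → Subgroup G),
        (∀ i < n, c i ≤ c (i + 1) ∧ ((c i).subgroupOf (c (i + 1))).Normal) →
        SChain n (c 0) (c n) by
      exact h n c hcond
    intro n
    induction n with
    | zero => intro c _; rfl
    | succ n ih =>
      intro c hc
      have h1 : SChain n (c 0) (c n) := ih c (fun i hi => hc i (hi.trans (Nat.lt_succ_self n)))
      exact ⟨c n, h1, relNorm_iff.mpr ⟨(hc n (Nat.lt_succ_self n)).1, (hc n (Nat.lt_succ_self n)).2⟩⟩
  · rintro ⟨n, hn⟩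
    suffices h : ∀ (n : ℕ) (K H : Subgroup G), SChain n K H →
        ∃ c : ℕ → Subgroup G, c 0 = K ∧ c n = H ∧
          ∀ i < n, c i ≤ c (i + 1) ∧ ((c i).subgroupOf (c (i + 1))).Normal by
      obtain ⟨c, h0, h1, h2⟩ := h n K ⊤ hn
      exact ⟨n, c, h0, h1, h2⟩
    clear hn
    intro n
    induction n with
    | zero => rintro K H rfl; exact ⟨fun _ => K, rfl, rfl, by omega⟩
    | succ n ih =>
      intro K H hKH
      obtain ⟨M, hKM, hMH⟩ := schain_destruct_bot hKH
      obtain ⟨c, h0, h1, h2⟩ := ih M H hMH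
      refine ⟨fun i => Nat.rec K (fun j _ => c j) i, rfl, h1, ?_⟩
      rintro (_ | j) hi
      · show K ≤ c 0 ∧ (K.subgroupOf (c 0)).Normal
        rw [h0]
        exact ⟨hKM.1, (relNorm_iff.mp hKM).2⟩
      · exact h2 j (by omega)

end Aux

section Aux2

open Subgroup

variable {G : Type*} [Group G]

theorem map_subtype_top (K : Subgroup G) : Subgroup.map K.subtype ⊤ = K := by
  rw [← MonoidHom.range_eq_map, Subgroup.range_subtype]

/-- ambient form of perfectness -/
theorem perfect_iff_commutator_self {K : Subgroup G} :
    commutator ↥K = ⊤ ↔ ⁅K, K⁆ = K := by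
  have h := Subgroup.map_commutator (⊤ : Subgroup ↥K) ⊤ K.subtype
  rw [map_subtype_top] at h
  constructor
  · intro hK
    rw [← commutator_def, hK, map_subtype_top] at h
    exact h.symm
  · intro hK
    apply Subgroup.map_injective K.subtype_injective
    rw [← commutator_def] at h
    rw [h, map_subtype_top, hK]


theorem conj_center_eq {z : G} (hz : z ∈ Subgroup.center G) (x : G) : z * x * z⁻¹ = x := by
  rw [← Subgroup.mem_center_iff.mp hz x, mul_assoc, mul_inv_cancel, mul_one]

theorem commutator_mul_center_left {z : G} (hz : z ∈ Subgroup.center G) (m x : G) :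
    ⁅m * z, x⁆ = ⁅m, x⁆ := by
  calc ⁅m * z, x⁆ = m * (z * x * z⁻¹) * m⁻¹ * x⁻¹ := by group
    _ = m * x * m⁻¹ * x⁻¹ := by rw [conj_center_eq hz]
    _ = ⁅m, x⁆ := by group

theorem commutator_mul_center_right {z : G} (hz : z ∈ Subgroup.center G) (m x : G) :
    ⁅x, m * z⁆ = ⁅x, m⁆ := by
  calc ⁅x, m * z⁆ = x * m * (z * x⁻¹ * z⁻¹) * m⁻¹ := by group
    _ = x * m * x⁻¹ * m⁻¹ := by rw [conj_center_eq hz]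
    _ = ⁅x, m⁆ := by group

theorem quasisimple_normal {Q : Type*} [Group Q] (h : IsQuasisimpleGroup Q)
    {M : Subgroup Q} (hM : M.Normal) : M ≤ Subgroup.center Q ∨ M = ⊤ := by
  have hmap : (M.map (QuotientGroup.mk' (Subgroup.center Q))).Normal :=
    hM.map _ (QuotientGroup.mk'_surjective _)
  rcases h.2.eq_bot_or_eq_top_of_normal _ hmap with hbot | htop
  · left
    rw [Subgroup.map_eq_bot_iff, QuotientGroup.ker_mk'] at hbot
    exact hbot
  · right
    -- every element of Q is a product m * z
    have hdec : ∀ q : Q, ∃ m ∈ M, ∃ z ∈ Subgroup.center Q, q = m * z := by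
      intro q
      have : QuotientGroup.mk' (Subgroup.center Q) q ∈
          M.map (QuotientGroup.mk' (Subgroup.center Q)) := htop ▸ trivial
      obtain ⟨m, hm, hmq⟩ := this
      rw [QuotientGroup.mk'_eq_mk'] at hmq
      obtain ⟨z, hz, rfl⟩ := hmq
      exact ⟨m, hm, z, hz, rfl⟩
    have hcomm : commutator Q ≤ M := by
      rw [commutator_def, Subgroup.commutator_le]
      intro g₁ _ g₂ _
      obtain ⟨m₁, hm₁, z₁, hz₁, rfl⟩ := hdec g₁
      obtain ⟨m₂, hm₂, z₂, hz₂, rfl⟩ := hdec g₂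
      rw [commutator_mul_center_left hz₁, commutator_mul_center_right hz₂]
      exact M.mul_mem (M.mul_mem (M.mul_mem hm₁ hm₂) (M.inv_mem hm₁)) (M.inv_mem hm₂)
    rw [h.1] at hcomm
    exact top_le_iff.mp hcomm

end Aux2

section Aux3

open Subgroup

variable {G : Type*} [Group G]

theorem quasisimple_exists_not_commute {Q : Type*} [Group Q] (h : IsQuasisimpleGroup Q) :
    ∃ x y : Q, x * y ≠ y * x := by
  by_contra hc
  push_neg at hc
  haveI : Subsingleton (Q ⧸ Subgroup.center Q) := by
    constructor
    intro a b
    induction a using QuotientGroup.induction_on with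
    | H a =>
    induction b using QuotientGroup.induction_on with
    | H b =>
    exact QuotientGroup.eq.mpr (Subgroup.mem_center_iff.mpr fun g => hc g _)
  haveI := h.2.toNontrivial
  exact false_of_nontrivial_of_subsingleton (Q ⧸ Subgroup.center Q)

theorem quasisimple_ne_bot {K : Subgroup G} (h : IsQuasisimpleGroup ↥K) : K ≠ ⊥ := by
  rintro rfl
  obtain ⟨x, y, hxy⟩ := quasisimple_exists_not_commute h
  exact hxy (Subtype.ext (by
    have hx : (x : G) = 1 := x.2
    have hy : (y : G) = 1 := y.2
    simp [hx, hy]))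

theorem quasisimple_not_le_centralizer {K : Subgroup G} (h : IsQuasisimpleGroup ↥K) :
    ¬ K ≤ Subgroup.centralizer (K : Set G) := by
  intro hle
  obtain ⟨x, y, hxy⟩ := quasisimple_exists_not_commute h
  exact hxy (Subtype.ext (by
    push_cast
    exact (Subgroup.mem_centralizer_iff.mp (hle x.2) y y.2).symm))

theorem quasisimple_not_le_center {K : Subgroup G} (h : IsQuasisimpleGroup ↥K) :
    ¬ K ≤ Subgroup.center G := by
  intro hle
  exact quasisimple_not_le_centralizer h
    (fun x hx => Subgroup.mem_centralizer_iff.mpr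
      (fun y _ => Subgroup.mem_center_iff.mp (hle hx) y))

theorem componentL1 : ∀ (n : ℕ) {K H N : Subgroup G}, SChain n K H →
    IsQuasisimpleGroup ↥K → RelNorm N H →
    K ≤ N ∨ K ≤ Subgroup.centralizer (N : Set G) := by
  intro n
  induction n with
  | zero =>
    rintro K H N rfl hQ hN
    have hnor : (N.subgroupOf K).Normal := (relNorm_iff.mp hN).2
    rcases quasisimple_normal hQ hnor with hcen | htop
    · right
      intro k hk
      rw [Subgroup.mem_centralizer_iff]
      intro y hy
      have hyK : (⟨y, hN.1 hy⟩ : ↥K) ∈ N.subgroupOf K := by rwa [mem_subgroupOf]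
      have := Subgroup.mem_center_iff.mp (hcen hyK) ⟨k, hk⟩
      exact congrArg Subtype.val this.symm
    · left
      intro k hk
      have : (⟨k, hk⟩ : ↥K) ∈ N.subgroupOf K := htop ▸ trivial
      rwa [mem_subgroupOf] at this
  | succ n ih =>
    rintro K H N ⟨M, hKM, hMH⟩ hQ hN
    have hrel : RelNorm (M ⊓ N) M := by
      refine ⟨inf_le_left, fun g hg x hx => ?_⟩
      rw [Subgroup.mem_inf] at hx ⊢
      exact ⟨mul_mem (mul_mem hg hx.1) (inv_mem hg), hN.2 g (hMH.1 hg) x hx.2⟩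
    rcases ih hKM hQ hrel with hle | hcent
    · exact Or.inl (hle.trans inf_le_right)
    · right
      have hKleM : K ≤ M := hKM.le
      have hKN : ⁅K, N⁆ ≤ M ⊓ N := by
        rw [Subgroup.commutator_le]
        intro k hk x hx
        rw [Subgroup.mem_inf]
        constructor
        · have : ⁅k, x⁆ = k * (x * k⁻¹ * x⁻¹) := by group
          rw [this]
          exact mul_mem (hKleM hk) (hMH.2 x (hN.1 hx) k⁻¹ (inv_mem (hKleM hk)))
        · have : ⁅k, x⁆ = (k * x * k⁻¹) * x⁻¹ := by group
          rw [this]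
          exact mul_mem (hN.2 k (hMH.1 (hKleM hk)) x hx) (inv_mem hx)
      have hbot : ⁅M ⊓ N, K⁆ = ⊥ := by
        rw [Subgroup.commutator_comm]
        exact Subgroup.commutator_eq_bot_iff_le_centralizer.mpr hcent
      have h1 : ⁅⁅K, N⁆, K⁆ = ⊥ :=
        le_bot_iff.mp (hbot ▸ Subgroup.commutator_mono hKN le_rfl)
      have h2 : ⁅⁅N, K⁆, K⁆ = ⊥ := by
        rw [Subgroup.commutator_comm N K]
        exact h1
      have h3 : ⁅⁅K, K⁆, N⁆ = ⊥ :=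
        Subgroup.commutator_commutator_eq_bot_of_rotate h1 h2
      rw [perfect_iff_commutator_self.mp hQ.1] at h3
      exact Subgroup.commutator_eq_bot_iff_le_centralizer.mp h3

theorem componentL2 : ∀ (m : ℕ) {K H N : Subgroup G}, SChain m N H →
    (∃ n, SChain n K H) → IsQuasisimpleGroup ↥K →
    K ≤ N ∨ K ≤ Subgroup.centralizer (N : Set G) := by
  intro m
  induction m with
  | zero =>
    rintro K H N rfl ⟨n, hn⟩ _
    exact Or.inl hn.le
  | succ m ih =>
    rintro K H N hchain ⟨n, hn⟩ hQ
    obtain ⟨M₁, hNM₁, hM₁H⟩ := schain_destruct_bot hchain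
    rcases ih hM₁H ⟨n, hn⟩ hQ with hle | hcent
    · have : SChain n K M₁ := schain_inter hn hle hM₁H.le
      exact componentL1 n this hQ hNM₁
    · exact Or.inr (hcent.trans (Subgroup.centralizer_le (by exact_mod_cast hNM₁.1)))

theorem components_commute {K L : Subgroup G} (hK : IsComponent K) (hL : IsComponent L)
    (hne : K ≠ L) : K ≤ Subgroup.centralizer (L : Set G) := by
  obtain ⟨nK, hcK⟩ := isSubnormal_iff_schain.mp hK.1
  obtain ⟨nL, hcL⟩ := isSubnormal_iff_schain.mp hL.1
  rcases componentL2 nL hcL ⟨nK, hcK⟩ hK.2 with hle | hcent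
  · rcases componentL2 nK hcK ⟨nL, hcL⟩ hL.2 with hle' | hcent'
    · exact absurd (le_antisymm hle hle') hne
    · intro k hk
      rw [Subgroup.mem_centralizer_iff]
      intro l hl
      exact (Subgroup.mem_centralizer_iff.mp (hcent' hl) k hk).symm
  · exact hcent

end Aux3

section Aux4

open Subgroup

variable {G : Type*} [Group G]

theorem smul_sSup' (e : MulAut G) (s : Set (Subgroup G)) :
    e • sSup s = sSup ((e • ·) '' s) := by
  rw [sSup_image]
  show Subgroup.map e.toMonoidHom (sSup s) = _
  rw [(Subgroup.gc_map_comap e.toMonoidHom).l_sSup]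
  rfl

theorem smul_iSup' {ι : Sort*} (e : MulAut G) (f : ι → Subgroup G) :
    e • (⨆ i, f i) = ⨆ i, e • f i := by
  show Subgroup.map e.toMonoidHom _ = _
  rw [(Subgroup.gc_map_comap e.toMonoidHom).l_iSup]
  rfl

theorem isSolvable_map {G' : Type*} [Group G'] (f : G →* G') {H : Subgroup G}
    (h : IsSolvable ↥H) : IsSolvable ↥(Subgroup.map f H) := by
  haveI : Group.IsSolvable _ := h
  exact solvable_of_surjective (f.subgroupMap_surjective H)

theorem isSolvable_smul (e : MulAut G) {H : Subgroup G} (h : IsSolvable ↥H) :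
    IsSolvable ↥(e • H) :=
  isSolvable_map e.toMonoidHom h

theorem normal_of_conj_smul {N : Subgroup G} (h : ∀ g : G, MulAut.conj g • N = N) :
    N.Normal := by
  constructor
  intro n hn g
  have := Subgroup.smul_mem_pointwise_smul n (MulAut.conj g) N hn
  rw [h g] at this
  simpa [MulAut.smul_def, MulAut.conj_apply] using this

theorem normal_sSup {s : Set (Subgroup G)} (h : ∀ N ∈ s, N.Normal) : (sSup s).Normal := by
  apply normal_of_conj_smul
  intro g
  rw [smul_sSup']
  congr 1
  ext X
  constructor
  · rintro ⟨N, hN, rfl⟩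
    haveI := h N hN
    show MulAut.conj g • N ∈ s
    rwa [Subgroup.Normal.conj_smul_eq_self]
  · intro hX
    haveI := h X hX
    exact ⟨X, hX, Subgroup.Normal.conj_smul_eq_self g X⟩

theorem isSolvable_sup {N T : Subgroup G} (hT : T.Normal) (hN : IsSolvable ↥N)
    (hT' : IsSolvable ↥T) : IsSolvable ↥(N ⊔ T) := by
  haveI : Group.IsSolvable _ := hN
  haveI : Group.IsSolvable _ := hT'
  haveI : (T.subgroupOf (N ⊔ T)).Normal := hT.subgroupOf _
  haveI : Group.IsSolvable ↥(T.subgroupOf (N ⊔ T)) :=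
    solvable_of_solvable_injective
      (f := (Subgroup.subgroupOfEquivOfLe (le_sup_right : T ≤ N ⊔ T)).toMonoidHom)
      (Subgroup.subgroupOfEquivOfLe _).injective
  haveI : Group.IsSolvable (↥(N ⊔ T) ⧸ T.subgroupOf (N ⊔ T)) := by
    apply solvable_of_surjective
      (f := (QuotientGroup.mk' (T.subgroupOf (N ⊔ T))).comp
        (Subgroup.inclusion (le_sup_left : N ≤ N ⊔ T)))
    intro q
    obtain ⟨⟨j, hj⟩, rfl⟩ := QuotientGroup.mk'_surjective _ q
    have hj' : j ∈ (N : Set G) * (T : Set G) := by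
      rw [← Subgroup.mul_normal]; exact hj
    obtain ⟨n, hn, t, ht, rfl⟩ := hj'
    refine ⟨⟨n, hn⟩, ?_⟩
    simp only [MonoidHom.comp_apply]
    refine (QuotientGroup.mk'_eq_mk' _).mpr
      ⟨⟨t, (le_sup_right : T ≤ N ⊔ T) ht⟩, by rwa [mem_subgroupOf], ?_⟩
    apply Subtype.ext
    simp [Subgroup.coe_inclusion]
  exact solvable_of_ker_le_range (T.subgroupOf (N ⊔ T)).subtype
    (QuotientGroup.mk' (T.subgroupOf (N ⊔ T)))
    (by rw [QuotientGroup.ker_mk', Subgroup.range_subtype])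

theorem isSolvable_bot' : IsSolvable ↥(⊥ : Subgroup G) :=
  isSolvable_of_comm fun a b => Subtype.ext (by
    have ha : (a : G) = 1 := a.2
    have hb : (b : G) = 1 := b.2
    simp [ha, hb])

theorem isSolvable_sSup [Finite G] {s : Set (Subgroup G)}
    (h : ∀ N ∈ s, N.Normal) (h' : ∀ N ∈ s, IsSolvable ↥N) : IsSolvable ↥(sSup s) := by
  have hfin : s.Finite := Set.toFinite s
  refine @Set.Finite.induction_on (Subgroup G)
    (fun s _ => (∀ N ∈ s, N.Normal) → (∀ N ∈ s, IsSolvable ↥N) → IsSolvable ↥(sSup s))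
    s hfin (fun _ _ => by rw [sSup_empty]; exact isSolvable_bot') ?_ h h'
  intro a t ha hfint ih h h'
  rw [sSup_insert]
  exact isSolvable_sup (normal_sSup fun N hN => h N (Set.mem_insert_of_mem a hN))
    (h' a (Set.mem_insert a t))
    (ih (fun N hN => h N (Set.mem_insert_of_mem a hN))
        (fun N hN => h' N (Set.mem_insert_of_mem a hN)))

theorem not_solvable_of_perfect {Q : Type*} [Group Q] (h : commutator Q = ⊤)
    (hnt : Nontrivial Q) : ¬ IsSolvable Q := by
  intro hs
  obtain ⟨n, hn⟩ := hs
  have htop : ∀ m, derivedSeries Q m = ⊤ := by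
    intro m
    induction m with
    | zero => rfl
    | succ m ih => rw [derivedSeries_succ, ih, ← commutator_def, h]
  rw [htop n] at hn
  obtain ⟨x, y, hxy⟩ := hnt
  apply hxy
  have hx : x ∈ (⊥ : Subgroup Q) := hn ▸ Subgroup.mem_top x
  have hy : y ∈ (⊥ : Subgroup Q) := hn ▸ Subgroup.mem_top y
  rw [Subgroup.mem_bot] at hx hy
  rw [hx, hy]

theorem solvable_of_commutator_solvable {Q : Type*} [Group Q]
    (h : IsSolvable ↥(commutator Q)) : IsSolvable Q := by
  haveI : Group.IsSolvable _ := h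
  haveI : Group.IsSolvable (Q ⧸ commutator Q) := by
    apply isSolvable_of_comm
    intro a b
    induction a using QuotientGroup.induction_on with
    | H a =>
    induction b using QuotientGroup.induction_on with
    | H b =>
    show ((a * b : Q) : Q ⧸ commutator Q) = ((b * a : Q) : Q ⧸ commutator Q)
    rw [QuotientGroup.eq]
    have : (a * b)⁻¹ * (b * a) = ⁅b⁻¹, a⁻¹⁆ := by group
    rw [this, commutator_def]
    exact Subgroup.commutator_mem_commutator (Subgroup.mem_top _) (Subgroup.mem_top _)
  exact solvable_of_ker_le_range (commutator Q).subtype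
    (QuotientGroup.mk' (commutator Q))
    (by rw [QuotientGroup.ker_mk', Subgroup.range_subtype])

theorem smul_solRadical {Γ : Type*} [Group Γ] (e : MulAut Γ) :
    e • solRadical Γ = solRadical Γ := by
  have himg : ∀ f : MulAut Γ,
      (f • ·) '' {N : Subgroup Γ | N.Normal ∧ IsSolvable ↥N} ⊆
        {N : Subgroup Γ | N.Normal ∧ IsSolvable ↥N} := by
    rintro f _ ⟨N, ⟨hn, hs⟩, rfl⟩
    refine ⟨?_, isSolvable_smul f hs⟩
    show (Subgroup.map f.toMonoidHom N).Normal
    exact hn.map f.toMonoidHom f.surjective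
  apply le_antisymm
  · rw [show solRadical Γ = sSup {N : Subgroup Γ | N.Normal ∧ IsSolvable ↥N} from rfl,
      smul_sSup']
    exact sSup_le_sSup (himg e)
  · have h2 : e⁻¹ • solRadical Γ ≤ solRadical Γ := by
      rw [show solRadical Γ = sSup {N : Subgroup Γ | N.Normal ∧ IsSolvable ↥N} from rfl,
        smul_sSup']
      exact sSup_le_sSup (himg e⁻¹)
    have h3 : e • (e⁻¹ • solRadical Γ) ≤ e • solRadical Γ :=
      Subgroup.pointwise_smul_le_pointwise_smul_iff.mpr h2
    rwa [smul_inv_smul] at h3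

end Aux4

section Aux5

open Subgroup

variable {G : Type*} [Group G]

theorem RelNorm.smul {N H : Subgroup G} (h : RelNorm N H) (e : MulAut G) :
    RelNorm (e • N) (e • H) := by
  constructor
  · exact Subgroup.pointwise_smul_le_pointwise_smul_iff.mpr h.1
  · intro g hg x hx
    rw [Subgroup.mem_pointwise_smul_iff_inv_smul_mem] at hg hx ⊢
    rw [MulAut.smul_def] at hg hx ⊢
    rw [map_mul, map_mul, map_inv]
    exact h.2 _ hg _ hx

theorem schain_smul (e : MulAut G) :
    ∀ {n : ℕ} {K H : Subgroup G}, SChain n K H → SChain n (e • K) (e • H) := by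
  intro n
  induction n with
  | zero => rintro K H rfl; rfl
  | succ n ih =>
    rintro K H ⟨M, h1, h2⟩
    exact ⟨e • M, ih h1, h2.smul e⟩

theorem smul_top' (e : MulAut G) : e • (⊤ : Subgroup G) = ⊤ := by
  show Subgroup.map e.toMonoidHom ⊤ = ⊤
  rw [← MonoidHom.range_eq_map]
  exact MonoidHom.range_eq_top.mpr e.surjective

theorem isSimpleGroup_of_mulEquiv {A B : Type*} [Group A] [Group B] (e : A ≃* B)
    (h : IsSimpleGroup A) : IsSimpleGroup B := by
  haveI : Nontrivial A := h.toNontrivial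
  haveI : Nontrivial B := e.symm.toEquiv.nontrivial
  refine ⟨fun W hW => ?_⟩
  have hW' : (W.comap e.toMonoidHom).Normal := hW.comap _
  have hsurj : Function.Surjective e.toMonoidHom := e.surjective
  rcases h.eq_bot_or_eq_top_of_normal _ hW' with hb | ht
  · left
    rw [← Subgroup.map_comap_eq_self_of_surjective hsurj W, hb, Subgroup.map_bot]
  · right
    rw [← Subgroup.map_comap_eq_self_of_surjective hsurj W, ht,
      ← MonoidHom.range_eq_map]
    exact MonoidHom.range_eq_top.mpr hsurj

theorem map_center_mulEquiv {A B : Type*} [Group A] [Group B] (e : A ≃* B) :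
    Subgroup.map e.toMonoidHom (Subgroup.center A) = Subgroup.center B := by
  ext x
  rw [Subgroup.mem_map_equiv]
  simp only [Subgroup.mem_center_iff]
  constructor
  · intro hx g
    calc g * x = e (e.symm g) * e (e.symm x) := by rw [e.apply_symm_apply, e.apply_symm_apply]
      _ = e (e.symm g * e.symm x) := (map_mul _ _ _).symm
      _ = e (e.symm x * e.symm g) := by rw [hx (e.symm g)]
      _ = x * g := by rw [map_mul, e.apply_symm_apply, e.apply_symm_apply]
  · intro hx g
    apply e.injective
    rw [map_mul, map_mul, e.apply_symm_apply]
    exact hx (e g)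

theorem isQuasisimple_of_mulEquiv {A B : Type*} [Group A] [Group B] (e : A ≃* B)
    (h : IsQuasisimpleGroup A) : IsQuasisimpleGroup B := by
  have htop : Subgroup.map e.toMonoidHom ⊤ = ⊤ := by
    rw [← MonoidHom.range_eq_map]
    exact MonoidHom.range_eq_top.mpr e.surjective
  constructor
  · have hmc := Subgroup.map_commutator (⊤ : Subgroup A) ⊤ e.toMonoidHom
    rw [htop] at hmc
    rw [commutator_def, ← hmc, ← commutator_def, h.1, htop]
  · exact isSimpleGroup_of_mulEquiv (QuotientGroup.congr _ _ e (map_center_mulEquiv e)) h.2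

theorem isComponent_smul {K : Subgroup G} (e : MulAut G) (h : IsComponent K) :
    IsComponent (e • K) := by
  constructor
  · obtain ⟨n, hn⟩ := isSubnormal_iff_schain.mp h.1
    refine isSubnormal_iff_schain.mpr ⟨n, ?_⟩
    have := schain_smul e hn
    rwa [smul_top'] at this
  · exact isQuasisimple_of_mulEquiv (MulEquiv.subgroupMap (e : G ≃* G) K) h.2

theorem eq_top_of_map_center_quot_top (hperf : commutator G = ⊤) {H : Subgroup G}
    (h : Subgroup.map (QuotientGroup.mk' (Subgroup.center G)) H = ⊤) : H = ⊤ := by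
  have hdec : ∀ g : G, ∃ m ∈ H, ∃ z ∈ Subgroup.center G, m * z = g := by
    intro g
    have hg : QuotientGroup.mk' (Subgroup.center G) g ∈
        Subgroup.map (QuotientGroup.mk' (Subgroup.center G)) H := h ▸ trivial
    obtain ⟨m, hm, hmq⟩ := hg
    rw [QuotientGroup.mk'_eq_mk'] at hmq
    obtain ⟨z, hz, hzz⟩ := hmq
    exact ⟨m, hm, z, hz, hzz⟩
  have hle : commutator G ≤ H := by
    rw [commutator_def, Subgroup.commutator_le]
    intro g₁ _ g₂ _
    obtain ⟨m₁, hm₁, z₁, hz₁, rfl⟩ := hdec g₁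
    obtain ⟨m₂, hm₂, z₂, hz₂, rfl⟩ := hdec g₂
    rw [commutator_mul_center_left hz₁, commutator_mul_center_right hz₂]
    exact H.mul_mem (H.mul_mem (H.mul_mem hm₁ hm₂) (H.inv_mem hm₁)) (H.inv_mem hm₂)
  rw [hperf] at hle
  exact top_le_iff.mp hle

theorem centerQuotHom_apply_mk (e : MulAut G) (x : G) :
    (centerQuotHom G e) ((QuotientGroup.mk' (Subgroup.center G)) x)
      = (QuotientGroup.mk' (Subgroup.center G)) (e x) := by
  show (QuotientGroup.congr _ _ e
    (Subgroup.characteristic_iff_map_eq.mp inferInstance e)) _ = _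
  exact QuotientGroup.congr_mk' _ _ _ _ x

theorem map_mk_smul (e : MulAut G) (H : Subgroup G) :
    Subgroup.map (QuotientGroup.mk' (Subgroup.center G)) (e • H)
      = centerQuotHom G e • Subgroup.map (QuotientGroup.mk' (Subgroup.center G)) H := by
  show Subgroup.map _ (Subgroup.map e.toMonoidHom H)
    = Subgroup.map (centerQuotHom G e).toMonoidHom (Subgroup.map _ H)
  rw [Subgroup.map_map, Subgroup.map_map]
  have hcomp : (QuotientGroup.mk' (Subgroup.center G)).comp e.toMonoidHom
      = (centerQuotHom G e).toMonoidHom.comp (QuotientGroup.mk' (Subgroup.center G)) := by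
    ext x
    simp only [MonoidHom.comp_apply]
    exact (centerQuotHom_apply_mk e x).symm
  rw [hcomp]

theorem comap_mk_smul (e : MulAut G) (W : Subgroup (G ⧸ Subgroup.center G)) :
    e • Subgroup.comap (QuotientGroup.mk' (Subgroup.center G)) W
      = Subgroup.comap (QuotientGroup.mk' (Subgroup.center G)) (centerQuotHom G e • W) := by
  ext x
  rw [Subgroup.mem_pointwise_smul_iff_inv_smul_mem, Subgroup.mem_comap,
      Subgroup.mem_comap, Subgroup.mem_pointwise_smul_iff_inv_smul_mem]
  have hkey : (QuotientGroup.mk' (Subgroup.center G)) (e⁻¹ • x)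
      = (centerQuotHom G e)⁻¹ • ((QuotientGroup.mk' (Subgroup.center G)) x) := by
    rw [MulAut.smul_def, MulAut.smul_def]
    have h1 : (centerQuotHom G e)⁻¹ = centerQuotHom G e⁻¹ := by rw [map_inv]
    rw [h1]
    exact (centerQuotHom_apply_mk e⁻¹ x).symm
  rw [hkey]

end Aux5

section Aux6

open Subgroup

variable {G : Type*} [Group G]

theorem conj_inv_smul_eq (g x : G) : (MulAut.conj g)⁻¹ • x = g⁻¹ * x * g := by
  rw [← map_inv, MulAut.smul_def, MulAut.conj_apply, inv_inv]

theorem RelNorm.conj_smul_eq {N H : Subgroup G} (h : RelNorm N H) {g : G} (hg : g ∈ H) :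
    MulAut.conj g • N = N := by
  apply le_antisymm
  · intro x hx
    rw [Subgroup.mem_pointwise_smul_iff_inv_smul_mem, conj_inv_smul_eq] at hx
    have hxx : x = g * (g⁻¹ * x * g) * g⁻¹ := by group
    rw [hxx]
    exact h.2 g hg _ hx
  · intro x hx
    rw [Subgroup.mem_pointwise_smul_iff_inv_smul_mem, conj_inv_smul_eq]
    have := h.2 g⁻¹ (inv_mem hg) x hx
    rwa [inv_inv] at this

theorem conj_smul_self {H : Subgroup G} {g : G} (hg : g ∈ H) : MulAut.conj g • H = H :=
  (relNorm_self H).conj_smul_eq hg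

theorem smul_sSup_eq {P : Set (Subgroup G)}
    (hP : ∀ f : MulAut G, (f • ·) '' P ⊆ P) (e : MulAut G) : e • sSup P = sSup P := by
  apply le_antisymm
  · rw [smul_sSup']
    exact sSup_le_sSup (hP e)
  · have h2 : e⁻¹ • sSup P ≤ sSup P := by
      rw [smul_sSup']
      exact sSup_le_sSup (hP e⁻¹)
    have h3 : e • (e⁻¹ • sSup P) ≤ e • sSup P :=
      Subgroup.pointwise_smul_le_pointwise_smul_iff.mpr h2
    rwa [smul_inv_smul] at h3

theorem relNorm_commutator_self (H : Subgroup G) : RelNorm ⁅H, H⁆ H := by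
  have hle : ⁅H, H⁆ ≤ H := Subgroup.commutator_le.mpr fun g₁ hg₁ g₂ hg₂ => by
    rw [commutatorElement_def]
    exact mul_mem (mul_mem (mul_mem hg₁ hg₂) (inv_mem hg₁)) (inv_mem hg₂)
  refine ⟨hle, fun g hg x hx => ?_⟩
  have hsmul : MulAut.conj g • ⁅H, H⁆ = ⁅H, H⁆ := by
    show Subgroup.map (MulAut.conj g).toMonoidHom ⁅H, H⁆ = ⁅H, H⁆
    rw [Subgroup.map_commutator]
    have hH : Subgroup.map (MulAut.conj g).toMonoidHom H = H := conj_smul_self hg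
    rw [hH]
  have := Subgroup.smul_mem_pointwise_smul x (MulAut.conj g) _ hx
  rw [hsmul] at this
  simpa [MulAut.smul_def, MulAut.conj_apply] using this

theorem exists_perfect [Finite G] (H : Subgroup G) :
    ¬ IsSolvable ↥H → ∃ K : Subgroup G,
      K ≤ H ∧ K ≠ ⊥ ∧ commutator ↥K = ⊤ ∧ ∃ n, SChain n K H := by
  refine wellFounded_lt.induction
    (C := fun H : Subgroup G => ¬ IsSolvable ↥H → ∃ K : Subgroup G,
      K ≤ H ∧ K ≠ ⊥ ∧ commutator ↥K = ⊤ ∧ ∃ n, SChain n K H) H ?_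
  clear H
  intro H ih hH
  by_cases hperf : ⁅H, H⁆ = H
  · refine ⟨H, le_rfl, ?_, perfect_iff_commutator_self.mpr hperf, 0, rfl⟩
    rintro rfl
    exact hH isSolvable_bot'
  · have hrel := relNorm_commutator_self H
    have hlt : ⁅H, H⁆ < H := lt_of_le_of_ne hrel.1 hperf
    have hDns : ¬ IsSolvable ↥(⁅H, H⁆ : Subgroup G) := by
      intro hs
      apply hH
      apply solvable_of_commutator_solvable (Q := ↥H)
      have hmap : Subgroup.map H.subtype (commutator ↥H) = ⁅H, H⁆ := by
        have h := Subgroup.map_commutator (⊤ : Subgroup ↥H) ⊤ H.subtype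
        rw [map_subtype_top] at h
        rw [commutator_def, h]
      have e := Subgroup.equivMapOfInjective (commutator ↥H) H.subtype H.subtype_injective
      rw [hmap] at e
      haveI : Group.IsSolvable _ := hs
      exact solvable_of_surjective (f := e.symm.toMonoidHom) e.symm.surjective
    obtain ⟨K, hKle, hKbot, hKperf, n, hchain⟩ := ih _ hlt hDns
    exact ⟨K, hKle.trans hrel.1, hKbot, hKperf, n + 1, ⟨⁅H, H⁆, hchain, hrel⟩⟩

end Aux6

section Aux7

open Subgroup

variable {A G : Type*} [Group A] [Group G]

theorem map_mk_center_top : Subgroup.map (QuotientGroup.mk' (Subgroup.center G)) ⊤ = ⊤ := by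
  rw [← MonoidHom.range_eq_map]
  exact MonoidHom.range_eq_top.mpr (QuotientGroup.mk'_surjective _)

theorem quot_center_perfect (hperf : commutator G = ⊤) :
    commutator (G ⧸ Subgroup.center G) = ⊤ := by
  have h := Subgroup.map_commutator (⊤ : Subgroup G) ⊤ (QuotientGroup.mk' (Subgroup.center G))
  rw [map_mk_center_top] at h
  rw [commutator_def, ← h, ← commutator_def, hperf, map_mk_center_top]

theorem quot_center_nontrivial (φ : A →* MulAut G)
    (hA : IsMulASimple ((centerQuotHom G).comp φ)) :
    Nontrivial (G ⧸ Subgroup.center G) := by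
  by_contra hcon
  rw [not_nontrivial_iff_subsingleton] at hcon
  exact hA.1 fun x y => Subsingleton.elim _ _

theorem normal_solvable_le_center [Finite G] (φ : A →* MulAut G)
    (hA : IsMulASimple ((centerQuotHom G).comp φ)) (hperf : commutator G = ⊤)
    {N : Subgroup G} (hN : N.Normal) (hs : IsSolvable ↥N) : N ≤ Subgroup.center G := by
  have hnt : Nontrivial (G ⧸ Subgroup.center G) := quot_center_nontrivial φ hA
  have hsolinv : ∀ a : A, ((centerQuotHom G).comp φ) a • solRadical (G ⧸ Subgroup.center G)
      = solRadical (G ⧸ Subgroup.center G) := fun a => smul_solRadical _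
  rcases hA.2 _ (solRadical_normal _) hsolinv with hbot | htop
  · have hle : Subgroup.map (QuotientGroup.mk' (Subgroup.center G)) N ≤ solRadical _ :=
      le_sSup ⟨hN.map _ (QuotientGroup.mk'_surjective _), isSolvable_map _ hs⟩
    rw [hbot, le_bot_iff, Subgroup.map_eq_bot_iff, QuotientGroup.ker_mk'] at hle
    exact hle
  · exfalso
    have hsolv : IsSolvable ↥(solRadical (G ⧸ Subgroup.center G)) :=
      isSolvable_sSup (fun X hX => hX.1) (fun X hX => hX.2)
    rw [htop] at hsolv
    haveI : Group.IsSolvable _ := hsolv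
    exact not_solvable_of_perfect (quot_center_perfect hperf) hnt
      (solvable_of_surjective (f := (Subgroup.topEquiv (G := G ⧸ Subgroup.center G)).toMonoidHom)
        (Subgroup.topEquiv (G := G ⧸ Subgroup.center G)).surjective)

theorem solvable_relnorm_le_center [Finite G] (φ : A →* MulAut G)
    (hA : IsMulASimple ((centerQuotHom G).comp φ)) (hperf : commutator G = ⊤) :
    ∀ (n : ℕ) (M D : Subgroup G), SChain n M ⊤ → RelNorm D M → IsSolvable ↥D →
      D ≤ Subgroup.center G := by
  intro n
  induction n with
  | zero =>
    rintro M D rfl hD hs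
    exact normal_solvable_le_center φ hA hperf hD.normal_of_top hs
  | succ n ih =>
    intro M D hchain hD hs
    obtain ⟨M₁, hMM₁, hM₁⟩ := schain_destruct_bot hchain
    set s : Set (Subgroup G) := {X | RelNorm X M ∧ IsSolvable ↥X} with hsdef
    have hsub : ∀ X ∈ s, X ≤ M := fun X hX => hX.1.1
    have hsmem : ∀ (g : G), g ∈ M₁ → ∀ X ∈ s, MulAut.conj g • X ∈ s := by
      intro g hg X hX
      have hMeq : MulAut.conj g • M = M := hMM₁.conj_smul_eq hg
      refine ⟨⟨?_, ?_⟩, isSolvable_smul _ hX.2⟩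
      · rw [← hMeq]
        exact Subgroup.pointwise_smul_le_pointwise_smul_iff.mpr hX.1.1
      · intro m hm x hx
        rw [Subgroup.mem_pointwise_smul_iff_inv_smul_mem, conj_inv_smul_eq] at hx ⊢
        have hm' : g⁻¹ * m * g ∈ M := by
          have := hMM₁.2 g⁻¹ (inv_mem hg) m hm
          rwa [inv_inv] at this
        have : g⁻¹ * (m * x * m⁻¹) * g
            = (g⁻¹ * m * g) * (g⁻¹ * x * g) * (g⁻¹ * m * g)⁻¹ := by group
        rw [this]
        exact hX.1.2 _ hm' _ hx
    have hRsolv : IsSolvable ↥(sSup s) := by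
      set t : Set (Subgroup ↥M) := (fun X => X.subgroupOf M) '' s with htdef
      have ht1 : ∀ W ∈ t, W.Normal := by
        rintro _ ⟨X, hX, rfl⟩
        exact (relNorm_iff.mp hX.1).2
      have ht2 : ∀ W ∈ t, IsSolvable ↥W := by
        rintro _ ⟨X, hX, rfl⟩
        haveI : Group.IsSolvable _ := hX.2
        exact solvable_of_solvable_injective
          (f := (Subgroup.subgroupOfEquivOfLe hX.1.1).toMonoidHom)
          (Subgroup.subgroupOfEquivOfLe hX.1.1).injective
      have htsolv : IsSolvable ↥(sSup t) := isSolvable_sSup ht1 ht2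
      have hmapt : Subgroup.map M.subtype (sSup t) = sSup s := by
        rw [(Subgroup.gc_map_comap M.subtype).l_sSup, ← sSup_image, htdef, Set.image_image]
        congr 1
        conv_rhs => rw [← Set.image_id s]
        apply Set.image_congr
        intro X hX
        rw [Subgroup.subgroupOf_map_subtype, inf_eq_left.mpr hX.1.1]
        rfl
      have := isSolvable_map M.subtype htsolv
      rwa [hmapt] at this
    have hRrel : RelNorm (sSup s) M₁ := by
      constructor
      · exact (sSup_le hsub).trans hMM₁.1
      · intro g hg x hx
        have hsmul : MulAut.conj g • sSup s ≤ sSup s := by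
          rw [smul_sSup']
          apply sSup_le_sSup
          rintro _ ⟨X, hX, rfl⟩
          exact hsmem g hg X hX
        have := Subgroup.smul_mem_pointwise_smul x (MulAut.conj g) _ hx
        have h2 := hsmul this
        simpa [MulAut.smul_def, MulAut.conj_apply] using h2
    exact (le_sSup (show D ∈ s from ⟨hD, hs⟩)).trans (ih M₁ (sSup s) hM₁ hRrel hRsolv)

theorem exists_component_le [Finite G] (φ : A →* MulAut G)
    (hA : IsMulASimple ((centerQuotHom G).comp φ)) (hperf : commutator G = ⊤)
    {B : Subgroup G} (hBsub : ∃ n, SChain n B ⊤) (hBns : ¬ IsSolvable ↥B) :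
    ∃ K, K ≤ B ∧ IsComponent K := by
  set S := {K : Subgroup G | K ≤ B ∧ K ≠ ⊥ ∧ commutator ↥K = ⊤ ∧ ∃ n, SChain n K ⊤}
    with hSdef
  have hne : S.Nonempty := by
    obtain ⟨K, h1, h2, h3, n, h4⟩ := exists_perfect B hBns
    obtain ⟨m, hm⟩ := hBsub
    exact ⟨K, h1, h2, h3, m + n, schain_concat h4 hm⟩
  obtain ⟨K, hKS, hKmin⟩ := wellFounded_lt.has_min S hne
  obtain ⟨nK, hcK⟩ := hKS.2.2.2
  have key : ∀ V : Subgroup ↥K, V.Normal → V ≤ Subgroup.center ↥K ∨ V = ⊤ := by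
    intro V hV
    set N := Subgroup.map K.subtype V with hNdef
    have hNrel : RelNorm N K := by
      refine ⟨Subgroup.map_subtype_le V, ?_⟩
      rintro g hg _ ⟨v, hv, rfl⟩
      refine ⟨(⟨g, hg⟩ : ↥K) * v * (⟨g, hg⟩ : ↥K)⁻¹, hV.conj_mem v hv _, rfl⟩
    by_cases hNK : N = K
    · right
      apply Subgroup.map_injective K.subtype_injective
      rw [map_subtype_top, ← hNdef, hNK]
    · left
      have hNs : IsSolvable ↥N := by
        by_contra hns
        obtain ⟨K', h1, h2, h3, m, h4⟩ := exists_perfect N hns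
        have hchain1 : SChain 1 N K := ⟨N, rfl, hNrel⟩
        have hchainK' : SChain (nK + (1 + m)) K' ⊤ :=
          schain_concat (schain_concat h4 hchain1) hcK
        have hK'S : K' ∈ S :=
          ⟨(h1.trans (Subgroup.map_subtype_le V)).trans hKS.1, h2, h3, _, hchainK'⟩
        exact hKmin K' hK'S
          (lt_of_le_of_lt h1 (lt_of_le_of_ne (Subgroup.map_subtype_le V) hNK))
      have hNZ : N ≤ Subgroup.center G :=
        solvable_relnorm_le_center φ hA hperf nK K N hcK hNrel hNs
      intro v hv
      rw [Subgroup.mem_center_iff]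
      intro k
      apply Subtype.ext
      have hvc : (v : G) ∈ Subgroup.center G := hNZ ⟨v, hv, rfl⟩
      push_cast
      exact Subgroup.mem_center_iff.mp hvc (k : G)
  have hnontriv : Nontrivial (↥K ⧸ Subgroup.center ↥K) := by
    have hNC : ∃ x y : ↥K, x * y ≠ y * x := by
      by_contra hc
      push_neg at hc
      have hbotle : commutator ↥K ≤ ⊥ := by
        rw [commutator_def, Subgroup.commutator_le]
        intro g₁ _ g₂ _
        rw [Subgroup.mem_bot]
        exact commutatorElement_eq_one_iff_commute.mpr (hc g₁ g₂)
      rw [hKS.2.2.1] at hbotle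
      apply hKS.2.1
      rw [eq_bot_iff]
      intro x hx
      have h1 := hbotle (Subgroup.mem_top (⟨x, hx⟩ : ↥K))
      rw [Subgroup.mem_bot] at h1
      rw [Subgroup.mem_bot]
      exact congrArg Subtype.val h1
    obtain ⟨x, y, hxy⟩ := hNC
    have hx : x ∉ Subgroup.center ↥K := fun hx =>
      hxy ((Subgroup.mem_center_iff.mp hx y).symm)
    refine ⟨(QuotientGroup.mk' (Subgroup.center ↥K)) x, 1, fun h => hx ?_⟩
    exact (QuotientGroup.eq_one_iff x).mp h
  refine ⟨K, hKS.1, isSubnormal_iff_schain.mpr ⟨nK, hcK⟩, hKS.2.2.1, ?_⟩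
  haveI := hnontriv
  refine { eq_bot_or_eq_top_of_normal := ?_ }
  intro W hW
  set V := Subgroup.comap (QuotientGroup.mk' (Subgroup.center ↥K)) W with hVdef
  have hVN : V.Normal := hW.comap _
  have hWV : W = Subgroup.map (QuotientGroup.mk' (Subgroup.center ↥K)) V :=
    (Subgroup.map_comap_eq_self_of_surjective (QuotientGroup.mk'_surjective _) W).symm
  rcases key V hVN with hle | htop
  · left
    rw [hWV]
    exact (Subgroup.map_eq_bot_iff V).mpr (by rwa [QuotientGroup.ker_mk'])
  · right
    rw [hWV, htop, ← MonoidHom.range_eq_map]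
    exact MonoidHom.range_eq_top.mpr (QuotientGroup.mk'_surjective _)

end Aux7

/-- `G` is `A`-quasisimple iff `G` is nontrivial, `G = E(G)`, and
`A` acts transitively on the set of components of `G`. -/
theorem isAQuasisimple_iff_layer_eq_top_and_transitive
    {A G : Type*} [Group A] [Group G] [Finite G] (φ : A →* MulAut G) :
    IsAQuasisimple φ ↔
      Nontrivial G ∧ layer G = ⊤ ∧
        ∀ K L : Subgroup G, IsComponent K → IsComponent L → ∃ a : A, φ a • K = L := by
  
  constructor
  · rintro ⟨hperf, hA⟩
    have hGnt : Nontrivial G := by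
      rcases subsingleton_or_nontrivial G with hs | hn
      · exfalso
        obtain ⟨x, y, hxy⟩ := quot_center_nontrivial φ hA
        obtain ⟨x', rfl⟩ := QuotientGroup.mk'_surjective _ x
        obtain ⟨y', rfl⟩ := QuotientGroup.mk'_surjective _ y
        exact hxy (congrArg _ (Subsingleton.elim x' y'))
      · exact hn
    have hGns : ¬ IsSolvable ↥(⊤ : Subgroup G) := by
      intro hs
      haveI : Group.IsSolvable _ := hs
      exact not_solvable_of_perfect hperf hGnt
        (solvable_of_surjective (f := (Subgroup.topEquiv (G := G)).toMonoidHom)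
          (Subgroup.topEquiv (G := G)).surjective)
    obtain ⟨K₀, -, hK₀⟩ := exists_component_le φ hA hperf ⟨0, rfl⟩ hGns
    have hcompset : ∀ f : MulAut G, (f • ·) '' {K : Subgroup G | IsComponent K}
        ⊆ {K : Subgroup G | IsComponent K} := by
      rintro f _ ⟨K, hK, rfl⟩
      exact isComponent_smul f hK
    have hlayer_smul : ∀ e : MulAut G, e • layer G = layer G := fun e =>
      smul_sSup_eq hcompset e
    have hE_normal : (layer G).Normal := normal_of_conj_smul fun g => hlayer_smul _
    have hEbar_inv : ∀ a : A, ((centerQuotHom G).comp φ) a •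
        Subgroup.map (QuotientGroup.mk' (Subgroup.center G)) (layer G)
        = Subgroup.map (QuotientGroup.mk' (Subgroup.center G)) (layer G) := by
      intro a
      show centerQuotHom G (φ a) • _ = _
      rw [← map_mk_smul, hlayer_smul]
    have hEbar : Subgroup.map (QuotientGroup.mk' (Subgroup.center G)) (layer G) = ⊤ := by
      rcases hA.2 _ (hE_normal.map _ (QuotientGroup.mk'_surjective _)) hEbar_inv with hb | ht
      · exfalso
        rw [Subgroup.map_eq_bot_iff, QuotientGroup.ker_mk'] at hb
        exact quasisimple_not_le_center hK₀.2 ((le_sSup (show K₀ ∈ {K : Subgroup G | IsComponent K} from hK₀)).trans hb)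
      · exact ht
    have hlayer_top : layer G = ⊤ := eq_top_of_map_center_quot_top hperf hEbar
    have hcomp_norm : ∀ K : Subgroup G, IsComponent K → K.Normal := by
      intro K hK
      rw [← Subgroup.normalizer_eq_top_iff]
      apply le_antisymm le_top
      rw [← hlayer_top]
      apply sSup_le
      intro L hL
      by_cases hLK : L = K
      · subst hLK; exact Subgroup.le_normalizer
      · intro l hl
        have hcent := components_commute hL hK hLK hl
        rw [Subgroup.mem_centralizer_iff] at hcent
        rw [Subgroup.mem_normalizer_iff]
        intro h
        constructor
        · intro hh
          have h2 : l * h * l⁻¹ = h := by rw [← hcent h hh]; group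
          rw [h2]; exact hh
        · intro hh
          have h3 := hcent _ hh
          have h4 : l * h = l * (l * h * l⁻¹) := by rw [← h3]; group
          have h5 := mul_left_cancel h4
          rw [h5]; exact hh
    refine ⟨hGnt, hlayer_top, ?_⟩
    intro K L hK hL
    by_contra hcon
    push_neg at hcon
    have hEKcomp : ∀ a : A, IsComponent (φ a • K) := fun a => isComponent_smul _ hK
    have hEK_norm : (⨆ a : A, φ a • K).Normal := by
      apply normal_of_conj_smul
      intro g
      rw [smul_iSup']
      exact iSup_congr fun a => by
        haveI := hcomp_norm _ (hEKcomp a)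
        exact Subgroup.Normal.conj_smul_eq_self g _
    have hEKsmul : ∀ b : A, φ b • (⨆ a : A, φ a • K) = ⨆ a : A, φ a • K := by
      intro b
      rw [smul_iSup']
      apply le_antisymm
      · apply iSup_le
        intro a
        rw [smul_smul, ← map_mul]
        exact le_iSup (fun c : A => φ c • K) (b * a)
      · apply iSup_le
        intro a
        have heq : φ a • K = φ b • φ (b⁻¹ * a) • K := by
          rw [smul_smul, ← map_mul, mul_inv_cancel_left]
        rw [heq]
        exact le_iSup (fun c : A => φ b • φ c • K) (b⁻¹ * a)
    have hEKbar_inv : ∀ a : A, ((centerQuotHom G).comp φ) a •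
        Subgroup.map (QuotientGroup.mk' (Subgroup.center G)) (⨆ a : A, φ a • K)
        = Subgroup.map (QuotientGroup.mk' (Subgroup.center G)) (⨆ a : A, φ a • K) := by
      intro a
      show centerQuotHom G (φ a) • _ = _
      rw [← map_mk_smul, hEKsmul]
    have hKle : K ≤ ⨆ a : A, φ a • K := by
      have h1 : φ (1 : A) • K = K := by rw [map_one, one_smul]
      conv_lhs => rw [← h1]
      exact le_iSup (fun c : A => φ c • K) 1
    have hEKtop : (⨆ a : A, φ a • K) = ⊤ := by
      apply eq_top_of_map_center_quot_top hperf
      rcases hA.2 _ (hEK_norm.map _ (QuotientGroup.mk'_surjective _)) hEKbar_inv with hb | ht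
      · exfalso
        rw [Subgroup.map_eq_bot_iff, QuotientGroup.ker_mk'] at hb
        exact quasisimple_not_le_center hK.2 (hKle.trans hb)
      · exact ht
    have hcent : ∀ a : A, (φ a • K) ≤ Subgroup.centralizer (L : Set G) := fun a =>
      components_commute (hEKcomp a) hL (hcon a)
    have hEKle : (⨆ a : A, φ a • K) ≤ Subgroup.centralizer (L : Set G) := iSup_le hcent
    rw [hEKtop] at hEKle
    apply quasisimple_not_le_center hL.2
    intro l hl
    rw [Subgroup.mem_center_iff]
    intro g
    exact (Subgroup.mem_centralizer_iff.mp (hEKle (Subgroup.mem_top g)) l hl).symm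
  · rintro ⟨hnt, hlayer, htrans⟩
    have hperf : commutator G = ⊤ := by
      rw [← top_le_iff, ← hlayer]
      apply sSup_le
      intro K hK
      have hKK : ⁅K, K⁆ = K := perfect_iff_commutator_self.mp hK.2.1
      rw [← hKK, commutator_def]
      exact Subgroup.commutator_mono le_top le_top
    have hKex : ∃ K : Subgroup G, IsComponent K := by
      by_contra hcon
      push_neg at hcon
      have hempty : {K : Subgroup G | IsComponent K} = ∅ :=
        Set.eq_empty_iff_forall_notMem.mpr hcon
      have hbot : layer G = ⊥ := by
        rw [show layer G = sSup {K : Subgroup G | IsComponent K} from rfl, hempty, sSup_empty]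
      rw [hlayer] at hbot
      obtain ⟨x, y, hxy⟩ := hnt
      apply hxy
      have hx : x ∈ (⊥ : Subgroup G) := hbot ▸ Subgroup.mem_top x
      have hy : y ∈ (⊥ : Subgroup G) := hbot ▸ Subgroup.mem_top y
      rw [Subgroup.mem_bot] at hx hy
      rw [hx, hy]
    obtain ⟨K₀, hK₀⟩ := hKex
    refine ⟨hperf, ?_, ?_⟩
    · intro hc
      have h1 : commutator G ≤ Subgroup.center G := by
        rw [commutator_def, Subgroup.commutator_le]
        intro g₁ _ g₂ _
        have hmk : (QuotientGroup.mk' (Subgroup.center G)) ⁅g₁, g₂⁆ = 1 := by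
          rw [map_commutatorElement]
          exact commutatorElement_eq_one_iff_commute.mpr (hc _ _)
        rw [← QuotientGroup.ker_mk' (Subgroup.center G)]
        exact MonoidHom.mem_ker.mpr hmk
      have hZtop : Subgroup.center G = ⊤ := le_antisymm le_top (hperf ▸ h1)
      exact quasisimple_not_le_center hK₀.2 (hZtop ▸ le_top)
    · intro W hW hWinv
      by_cases hWbot : W = ⊥
      · exact Or.inl hWbot
      right
      have hM : (Subgroup.comap (QuotientGroup.mk' (Subgroup.center G)) W).Normal :=
        hW.comap _
      set M := Subgroup.comap (QuotientGroup.mk' (Subgroup.center G)) W with hMdef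
      have hWM : W = Subgroup.map (QuotientGroup.mk' (Subgroup.center G)) M :=
        (Subgroup.map_comap_eq_self_of_surjective (QuotientGroup.mk'_surjective _) W).symm
      have hMnc : ¬ M ≤ Subgroup.center G := by
        intro hle
        apply hWbot
        rw [hWM]
        exact (Subgroup.map_eq_bot_iff M).mpr (by rwa [QuotientGroup.ker_mk'])
      have hKM : ∃ K, IsComponent K ∧ K ≤ M := by
        by_contra hcon
        push_neg at hcon
        apply hMnc
        have hcent : ∀ K : Subgroup G, IsComponent K →
            K ≤ Subgroup.centralizer (M : Set G) := by
          intro K hK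
          obtain ⟨n, hn⟩ := isSubnormal_iff_schain.mp hK.1
          rcases componentL1 n hn hK.2 (relNorm_top hM) with h1 | h2
          · exact absurd h1 (hcon K hK)
          · exact h2
        have hlayerle : layer G ≤ Subgroup.centralizer (M : Set G) := sSup_le hcent
        rw [hlayer] at hlayerle
        intro m hm
        rw [Subgroup.mem_center_iff]
        intro g
        exact (Subgroup.mem_centralizer_iff.mp (hlayerle (Subgroup.mem_top g)) m hm).symm
      obtain ⟨K, hK, hKleM⟩ := hKM
      have hMsmul : ∀ a : A, φ a • M = M := by
        intro a
        rw [hMdef, comap_mk_smul]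
        rw [show centerQuotHom G (φ a) • W = W from hWinv a]
      have hall : ∀ L : Subgroup G, IsComponent L → L ≤ M := by
        intro L hL
        obtain ⟨a, ha⟩ := htrans K L hK hL
        rw [← ha, ← hMsmul a]
        exact Subgroup.pointwise_smul_le_pointwise_smul_iff.mpr hKleM
      have hMtop : M = ⊤ := by
        rw [← top_le_iff, ← hlayer]
        exact sSup_le hall
      rw [hWM, hMtop, ← MonoidHom.range_eq_map]
      exact MonoidHom.range_eq_top.mpr (QuotientGroup.mk'_surjective _)
end

section
/- Let A be a group acting by automorphisms on the finite group G and let K be a subgroup of G. Then K is an (A,sol)-component of G (i.e. K is the subgroup generated by the A-orbit of some sol-component of G) if and only if K is minimal among A-invariant nonsolvable subnormal subgroups of G, i.e. K is A-invariant, subnormal in G and nonsolvable, and every A-invariant nonsolvable subnormal subgroup of G contained in K equals K. -/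
open Pointwise

namespace SolComp

variable {G : Type*} [Group G] {G' : Type*} [Group G']

/-- `H` is normal in `K` (elementwise formulation). -/
def NIn (H K : Subgroup G) : Prop :=
  H ≤ K ∧ ∀ h ∈ H, ∀ k ∈ K, k * h * k⁻¹ ∈ H

theorem nIn_iff {H K : Subgroup G} (hle : H ≤ K) :
    NIn H K ↔ (H.subgroupOf K).Normal := by
  constructor
  · intro ⟨_, h⟩
    constructor
    intro x hx k
    rw [Subgroup.mem_subgroupOf] at hx ⊢
    exact h _ hx _ k.2
  · intro ⟨h⟩
    refine ⟨hle, fun x hx k hk => ?_⟩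
    have := h (⟨x, hle hx⟩ : K) (Subgroup.mem_subgroupOf.2 hx) ⟨k, hk⟩
    rw [Subgroup.mem_subgroupOf] at this
    exact this

/-- Subnormal chain of length `n` from `H` up to `K`. -/
def Snn (n : ℕ) (H K : Subgroup G) : Prop :=
  ∃ c : ℕ → Subgroup G, c 0 = H ∧ c n = K ∧ ∀ i < n, NIn (c i) (c (i + 1))

theorem snn_self (H : Subgroup G) : Snn 0 H H :=
  ⟨fun _ => H, rfl, rfl, by omega⟩

theorem snn_of_nIn {H K : Subgroup G} (h : NIn H K) : Snn 1 H K := by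
  refine ⟨fun i => if i = 0 then H else K, by simp, by simp, ?_⟩
  intro i hi
  have : i = 0 := by omega
  simpa [this] using h

theorem isSubnormal_iff_snn {H : Subgroup G} : IsSubnormal H ↔ ∃ n, Snn n H ⊤ := by
  constructor
  · rintro ⟨n, c, h0, hn, hc⟩
    exact ⟨n, c, h0, hn, fun i hi => ⟨(hc i hi).1, ((nIn_iff (hc i hi).1).2 (hc i hi).2).2⟩⟩
  · rintro ⟨n, c, h0, hn, hc⟩
    exact ⟨n, c, h0, hn, fun i hi => ⟨(hc i hi).1, (nIn_iff (hc i hi).1).1 (hc i hi)⟩⟩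

theorem chain_le {n : ℕ} {c : ℕ → Subgroup G} (h : ∀ i < n, NIn (c i) (c (i + 1))) :
    ∀ i ≤ n, c i ≤ c n := by
  induction n with
  | zero => intro i hi; have : i = 0 := by omega
            simp [this]
  | succ n ih =>
    intro i hi
    rcases Nat.lt_or_ge i (n+1) with hlt | hge
    · exact le_trans (ih (fun j hj => h j (by omega)) i (by omega)) (h n (by omega)).1
    · have : i = n + 1 := by omega
      simp [this]

theorem Snn.le {n : ℕ} {H K : Subgroup G} (h : Snn n H K) : H ≤ K := by
  obtain ⟨c, h0, hn, hc⟩ := h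
  have := chain_le hc 0 (Nat.zero_le n)
  rwa [h0, hn] at this

theorem Snn.trans {m n : ℕ} {H K L : Subgroup G} (h1 : Snn m H K) (h2 : Snn n K L) :
    Snn (m + n) H L := by
  obtain ⟨c1, hc10, hc1m, hc1⟩ := h1
  obtain ⟨c2, hc20, hc2n, hc2⟩ := h2
  refine ⟨fun i => if i ≤ m then c1 i else c2 (i - m), by simp [hc10], ?_, ?_⟩
  · show (if m + n ≤ m then c1 (m + n) else c2 (m + n - m)) = L
    rcases Nat.eq_zero_or_pos n with h | h
    · subst h
      simp only [Nat.add_zero]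
      rw [if_pos le_rfl]
      rw [hc1m, ← hc2n, hc20]
    · rw [if_neg (by omega)]
      rw [show m + n - m = n by omega, hc2n]
  · intro i hi
    show NIn (if i ≤ m then c1 i else c2 (i - m))
      (if i + 1 ≤ m then c1 (i + 1) else c2 (i + 1 - m))
    rcases Nat.lt_or_ge i m with h | h
    · rw [if_pos (by omega), if_pos (by omega)]
      exact hc1 i h
    · rcases Nat.eq_or_lt_of_le h with h' | h'
      · subst h'
        rw [if_pos le_rfl, if_neg (by omega), show m + 1 - m = 1 by omega, hc1m, ← hc20]
        exact hc2 0 (by omega)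
      · rw [if_neg (by omega), if_neg (by omega), show i + 1 - m = i - m + 1 by omega]
        exact hc2 (i - m) (by omega)

theorem Snn.map {n : ℕ} {H K : Subgroup G} (f : G →* G') (h : Snn n H K) :
    Snn n (H.map f) (K.map f) := by
  obtain ⟨c, h0, hn, hc⟩ := h
  refine ⟨fun i => (c i).map f, by simp only []; rw [h0], by simp only []; rw [hn], fun i hi => ?_⟩
  refine ⟨Subgroup.map_mono (hc i hi).1, ?_⟩
  rintro h' ⟨x, hx, rfl⟩ k' ⟨k, hk, rfl⟩
  exact ⟨k * x * k⁻¹, (hc i hi).2 x hx k hk, by simp⟩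

theorem Snn.comap {n : ℕ} {H K : Subgroup G} (f : G' →* G) (h : Snn n H K) :
    Snn n (H.comap f) (K.comap f) := by
  obtain ⟨c, h0, hn, hc⟩ := h
  refine ⟨fun i => (c i).comap f, by simp only []; rw [h0], by simp only []; rw [hn], fun i hi => ?_⟩
  refine ⟨Subgroup.comap_mono (hc i hi).1, fun x hx k hk => ?_⟩
  simp only [Subgroup.mem_comap, map_mul, map_inv] at *
  exact (hc i hi).2 _ hx _ hk

theorem Snn.inf_right {n : ℕ} {H K : Subgroup G} (M : Subgroup G) (h : Snn n H K) :
    Snn n (H ⊓ M) (K ⊓ M) := by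
  obtain ⟨c, h0, hn, hc⟩ := h
  refine ⟨fun i => c i ⊓ M, by simp only []; rw [h0], by simp only []; rw [hn], fun i hi => ?_⟩
  refine ⟨inf_le_inf_right M (hc i hi).1, ?_⟩
  rintro x ⟨hx1, hx2⟩ k ⟨hk1, hk2⟩
  exact ⟨(hc i hi).2 x hx1 k hk1, M.mul_mem (M.mul_mem hk2 hx2) (M.inv_mem hk2)⟩

/-- Transfer a chain `H ⊴⊴ W` into the group `↥W`. -/
theorem Snn.subgroupOf {n : ℕ} {H W : Subgroup G} (h : Snn n H W) :
    Snn n (H.subgroupOf W) (⊤ : Subgroup W) := by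
  have := h.comap W.subtype
  rwa [show W.comap W.subtype = ⊤ from W.subgroupOf_self] at this

/-- Transfer a chain in `↥W` out to `G`. -/
theorem Snn.mapSubtype {n : ℕ} {W : Subgroup G} {H : Subgroup W}
    (h : Snn n H (⊤ : Subgroup W)) : Snn n (H.map W.subtype) W := by
  have := h.map W.subtype
  rwa [show (⊤ : Subgroup W).map W.subtype = W by
    rw [← MonoidHom.range_eq_map, Subgroup.range_subtype]] at this

end SolComp
namespace SolComp

variable {G : Type*} [Group G] {G' : Type*} [Group G']

theorem solvable_of_mulEquiv {X Y : Type*} [Group X] [Group Y] (e : X ≃* Y)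
    [Group.IsSolvable X] : Group.IsSolvable Y :=
  solvable_of_surjective (f := e.toMonoidHom) e.surjective

theorem map_map_symm {X Y : Type*} [Group X] [Group Y] (e : X ≃* Y) (H : Subgroup Y) :
    (H.map e.symm.toMonoidHom).map e.toMonoidHom = H := by
  ext x
  simp only [Subgroup.mem_map]
  constructor
  · rintro ⟨y, ⟨z, hz, rfl⟩, rfl⟩
    simpa using hz
  · intro hx
    exact ⟨e.symm x, ⟨x, hx, rfl⟩, by simp⟩

theorem subsingleton_isSolvable {X : Type*} [Group X] [Subsingleton X] : Group.IsSolvable X := by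
  refine ⟨0, ?_⟩
  ext x
  simp [Subsingleton.elim x 1, Subgroup.one_mem]

/-- perfect and solvable implies trivial -/
theorem subsingleton_of_perfect_solvable {X : Type*} [Group X]
    (h : commutator X = ⊤) (hs : Group.IsSolvable X) : Subsingleton X := by
  have hds : ∀ n, derivedSeries X n = ⊤ := by
    intro n
    induction n with
    | zero => exact derivedSeries_zero X
    | succ n ih => rw [derivedSeries_succ, ih, ← commutator_def, h]
  obtain ⟨n, hn⟩ := hs
  rw [hds n] at hn
  constructor
  intro a b
  have ha : a ∈ (⊥ : Subgroup X) := hn ▸ Subgroup.mem_top a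
  have hb : b ∈ (⊥ : Subgroup X) := hn ▸ Subgroup.mem_top b
  rw [Subgroup.mem_bot] at ha hb
  rw [ha, hb]

theorem quasisimple_nontrivial {X : Type*} [Group X]
    (h : IsQuasisimpleGroup X) : Nontrivial X := by
  obtain ⟨-, hs⟩ := h
  by_contra hcon
  rw [not_nontrivial_iff_subsingleton] at hcon
  have : Subsingleton (X ⧸ Subgroup.center X) := Quotient.instSubsingletonQuotient _
  exact not_subsingleton_iff_nontrivial.2 hs.toNontrivial this

theorem quasisimple_not_solvable {X : Type*} [Group X]
    (h : IsQuasisimpleGroup X) (hs : Group.IsSolvable X) : False := by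
  have := subsingleton_of_perfect_solvable h.1 hs
  have := quasisimple_nontrivial h
  exact not_subsingleton_iff_nontrivial.2 this ‹Subsingleton X›

/-- the join of a normal solvable subgroup with a solvable subgroup is solvable -/
theorem sup_solvable {N M : Subgroup G} (hN : N.Normal) (hNs : Group.IsSolvable ↥N)
    (hMs : Group.IsSolvable ↥M) : Group.IsSolvable ↥(N ⊔ M) := by
  let ψ : ↥(N ⊔ M) →* G ⧸ N := (QuotientGroup.mk' N).comp (N ⊔ M).subtype
  have hrange : ψ.range = M.map (QuotientGroup.mk' N) := by
    ext q
    constructor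
    · rintro ⟨⟨x, hx⟩, rfl⟩
      have : x ∈ (N : Set G) * (M : Set G) := by
        rw [← Subgroup.normal_mul]; exact hx
      obtain ⟨n, hn, m, hm, rfl⟩ := this
      refine ⟨m, hm, ?_⟩
      show QuotientGroup.mk' N m = ψ ⟨n * m, hx⟩
      simp only [ψ, MonoidHom.comp_apply, Subgroup.coe_subtype]
      rw [QuotientGroup.mk'_eq_mk']
      exact ⟨m⁻¹ * n * m, by simpa using hN.conj_mem n hn m⁻¹, by group⟩
    · rintro ⟨m, hm, rfl⟩
      exact ⟨⟨m, Subgroup.mem_sup_right hm⟩, rfl⟩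
  have hsr : Group.IsSolvable ↥ψ.range := by
    rw [hrange]
    exact solvable_of_surjective (MonoidHom.subgroupMap_surjective (QuotientGroup.mk' N) M)
  have hker : Group.IsSolvable ↥ψ.ker := by
    have : ψ.ker = N.subgroupOf (N ⊔ M) := by
      ext x
      simp only [MonoidHom.mem_ker, Subgroup.mem_subgroupOf, ψ, MonoidHom.comp_apply,
        Subgroup.coe_subtype]
      exact QuotientGroup.eq_one_iff _
    rw [this]
    exact solvable_of_mulEquiv (Subgroup.subgroupOfEquivOfLe le_sup_left).symm
  exact solvable_of_ker_le_range ψ.ker.subtype ψ.rangeRestrict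
    (by rw [Subgroup.range_subtype, MonoidHom.ker_rangeRestrict])

end SolComp
namespace SolComp

variable {G : Type*} [Group G]

theorem normal_of_nIn_top {H : Subgroup G} (h : NIn H ⊤) : H.Normal :=
  ⟨fun x hx g => h.2 x hx g trivial⟩

theorem le_solRadical {N : Subgroup G} (h1 : N.Normal) (h2 : Group.IsSolvable ↥N) :
    N ≤ solRadical G :=
  le_sSup ⟨h1, h2⟩

theorem solRadical_solvable (G : Type*) [Group G] [Finite G] :
    Group.IsSolvable ↥(solRadical G) := by
  classical
  have key : ∀ s : Finset (Subgroup G),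
      (∀ N ∈ s, N.Normal ∧ Group.IsSolvable ↥N) → (s.sup id).Normal ∧ Group.IsSolvable ↥(s.sup id) := by
    intro s
    induction s using Finset.induction_on with
    | empty =>
      intro _
      refine ⟨?_, ?_⟩
      · simp only [Finset.sup_empty]
        infer_instance
      · rw [Finset.sup_empty]
        exact subsingleton_isSolvable
    | insert N s' hN ih =>
      intro hmem
      have h1 := hmem N (Finset.mem_insert_self N s')
      have h2 := ih fun M hM => hmem M (Finset.mem_insert_of_mem hM)
      rw [Finset.sup_insert]
      have hnormal : (N ⊔ s'.sup id).Normal := by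
        haveI := h1.1; haveI := h2.1
        exact Subgroup.sup_normal N (s'.sup id)
      exact ⟨hnormal, sup_solvable h1.1 h1.2 h2.2⟩
  have : {N : Subgroup G | N.Normal ∧ Group.IsSolvable ↥N}.Finite := Set.toFinite _
  have hrw : solRadical G = this.toFinset.sup id := by
    rw [Finset.sup_id_eq_sSup, Set.Finite.coe_toFinset]
    rfl
  rw [hrw]
  exact (key _ (fun N hN => by simpa using (Set.Finite.mem_toFinset this).1 hN)).2

theorem solRadical_map {X : Type*} [Group X] (e : X ≃* X) :
    (solRadical X).map e.toMonoidHom = solRadical X := by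
  have key : ∀ f : X ≃* X, (solRadical X).map f.toMonoidHom ≤ solRadical X := by
    intro f
    rw [solRadical, (Subgroup.gc_map_comap f.toMonoidHom).l_sSup]
    refine iSup_le fun N => iSup_le fun hN => ?_
    refine le_sSup ⟨hN.1.map f.toMonoidHom f.surjective, ?_⟩
    haveI : Group.IsSolvable ↥N := hN.2
    exact solvable_of_mulEquiv
      (@Subgroup.equivMapOfInjective _ _ _ _ N f.toMonoidHom f.injective)
  refine le_antisymm (key e) ?_
  have h2 := Subgroup.map_mono (f := e.toMonoidHom) (key e.symm)
  rwa [map_map_symm e (solRadical X)] at h2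

/-- A solvable subnormal subgroup lies in the solvable radical. -/
theorem snn_solvable_le_solRadical :
    ∀ (n : ℕ) {G : Type u_1} [Group G] [Finite G] (H : Subgroup G),
      Snn n H ⊤ → Group.IsSolvable ↥H → H ≤ solRadical G := by
  intro n
  induction n with
  | zero =>
    intro G _ _ H h hs
    obtain ⟨c, h0, hn, -⟩ := h
    have hH : H = ⊤ := by rw [← h0, hn]
    subst hH
    exact le_solRadical (by infer_instance) hs
  | succ n ih =>
    intro G _ _ H h hs
    obtain ⟨c, h0, hn, hc⟩ := h
    set W := c n with hW
    have hWnorm : W.Normal := by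
      have := hc n (by omega)
      rw [hn] at this
      exact normal_of_nIn_top this
    have hsnn : Snn n H W := ⟨c, h0, rfl, fun i hi => hc i (by omega)⟩
    have hle : H ≤ W := hsnn.le
    have hsub : Snn n (H.subgroupOf W) ⊤ := hsnn.subgroupOf
    have hsolv : Group.IsSolvable ↥(H.subgroupOf W) :=
      solvable_of_mulEquiv (Subgroup.subgroupOfEquivOfLe hle).symm
    have hih := ih (H.subgroupOf W) hsub hsolv
    have hmaple : H ≤ (solRadical ↥W).map W.subtype := by
      intro x hx
      exact ⟨⟨x, hle hx⟩, hih (Subgroup.mem_subgroupOf.2 hx), rfl⟩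
    refine le_trans hmaple (le_solRadical ?_ ?_)
    · constructor
      rintro x ⟨y, hy, rfl⟩ g
      have : W.subtype (MulAut.conjNormal g y) = g * W.subtype y * g⁻¹ := rfl
      refine ⟨MulAut.conjNormal g y, ?_, this.symm⟩
      have := solRadical_map (MulAut.conjNormal g : MulAut ↥W)
      rw [← this]
      exact ⟨y, hy, rfl⟩
    · have : Group.IsSolvable ↥(solRadical ↥W) := solRadical_solvable ↥W
      exact solvable_of_mulEquiv
        (Subgroup.equivMapOfInjective _ W.subtype W.subtype_injective)

theorem map_mk'_solRadical_eq_bot (G : Type*) [Group G] :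
    (solRadical G).map (QuotientGroup.mk' (solRadical G)) = ⊥ := by
  rw [eq_bot_iff]
  rintro x ⟨y, hy, rfl⟩
  simp only [Subgroup.mem_bot, QuotientGroup.mk'_apply, QuotientGroup.eq_one_iff]
  exact hy

theorem solRadical_quotient_eq_bot (G : Type*) [Group G] [Finite G] :
    solRadical (G ⧸ solRadical G) = ⊥ := by
  rw [eq_bot_iff]
  refine sSup_le (s := {N : Subgroup (G ⧸ solRadical G) | N.Normal ∧ Group.IsSolvable ↥N}) fun N hN => ?_
  set f := QuotientGroup.mk' (solRadical G)
  set P := N.comap f with hP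
  have hPnorm : P.Normal := hN.1.comap f
  have hsle : solRadical G ≤ P := by
    intro x hx
    simp only [hP, Subgroup.mem_comap, f, QuotientGroup.mk'_apply]
    have : (QuotientGroup.mk x : G ⧸ solRadical G) = 1 := (QuotientGroup.eq_one_iff x).2 hx
    rw [this]
    exact N.one_mem
  have hPsolv : Group.IsSolvable ↥P := by
    let ψ : ↥P →* ↥N := (f.comp P.subtype).codRestrict N (fun x => x.2)
    have hker : ψ.ker = (solRadical G).subgroupOf P := by
      ext x
      simp only [MonoidHom.mem_ker, Subgroup.mem_subgroupOf, ψ]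
      rw [Subtype.ext_iff]
      show f (P.subtype x) = 1 ↔ _
      simp only [f, QuotientGroup.mk'_apply]
      exact QuotientGroup.eq_one_iff _
    have hkersolv : Group.IsSolvable ↥ψ.ker := by
      rw [hker]
      have : Group.IsSolvable ↥(solRadical G) := solRadical_solvable G
      exact solvable_of_mulEquiv (Subgroup.subgroupOfEquivOfLe hsle).symm
    have hNsolv : Group.IsSolvable ↥N := hN.2
    exact solvable_of_ker_le_range ψ.ker.subtype ψ (by rw [Subgroup.range_subtype])
  have hPle : P ≤ solRadical G := le_solRadical hPnorm hPsolv
  have : N = P.map f := (Subgroup.map_comap_eq_self_of_surjective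
    (QuotientGroup.mk'_surjective _) N).symm
  rw [this]
  calc P.map f ≤ (solRadical G).map f := Subgroup.map_mono hPle
    _ = ⊥ := map_mk'_solRadical_eq_bot G

end SolComp
namespace SolComp

variable {G : Type*} [Group G] {G' : Type*} [Group G']

theorem commutator_top_iff {C : Subgroup G} : commutator ↥C = ⊤ ↔ ⁅C, C⁆ = C := by
  have hmapc : (commutator ↥C).map C.subtype = ⁅C, C⁆ := by
    rw [commutator_def, Subgroup.map_commutator, ← MonoidHom.range_eq_map,
      Subgroup.range_subtype]
  constructor
  · intro h
    rw [← hmapc, h, ← MonoidHom.range_eq_map, Subgroup.range_subtype]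
  · intro h
    apply Subgroup.map_injective C.subtype_injective
    rw [hmapc, h, ← MonoidHom.range_eq_map, Subgroup.range_subtype]

/-- The iterated derived series of a subgroup, in the ambient group. -/
def dser (Q : Subgroup G) : ℕ → Subgroup G
  | 0 => Q
  | (n + 1) => ⁅dser Q n, dser Q n⁆

theorem dser_succ_le (Q : Subgroup G) (n : ℕ) : dser Q (n + 1) ≤ dser Q n := by
  show ⁅dser Q n, dser Q n⁆ ≤ dser Q n
  rw [Subgroup.commutator_le]
  intro g1 h1 g2 h2
  exact Subgroup.mul_mem _ (Subgroup.mul_mem _ (Subgroup.mul_mem _ h1 h2)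
    (Subgroup.inv_mem _ h1)) (Subgroup.inv_mem _ h2)

theorem dser_le (Q : Subgroup G) (n : ℕ) : dser Q n ≤ Q := by
  induction n with
  | zero => exact le_rfl
  | succ n ih => exact le_trans (dser_succ_le Q n) ih

theorem dser_map (f : G →* G') (Q : Subgroup G) (n : ℕ) :
    (dser Q n).map f = dser (Q.map f) n := by
  induction n with
  | zero => rfl
  | succ n ih => show (⁅dser Q n, dser Q n⁆).map f = ⁅_, _⁆
                 rw [Subgroup.map_commutator, ih]

theorem dser_eq_self_of_perfect {Q : Subgroup G} (h : ⁅Q, Q⁆ = Q) (n : ℕ) :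
    dser Q n = Q := by
  induction n with
  | zero => rfl
  | succ n ih => show ⁅dser Q n, dser Q n⁆ = Q
                 rw [ih, h]

theorem le_dser_of_perfect {Q H : Subgroup G} (hle : H ≤ Q) (h : ⁅H, H⁆ = H) (n : ℕ) :
    H ≤ dser Q n := by
  induction n with
  | zero => exact hle
  | succ n ih =>
    show H ≤ ⁅dser Q n, dser Q n⁆
    calc H = ⁅H, H⁆ := h.symm
      _ ≤ ⁅dser Q n, dser Q n⁆ := Subgroup.commutator_mono ih ih

theorem nIn_dser (Q : Subgroup G) (n : ℕ) : NIn (dser Q n) Q := by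
  refine ⟨dser_le Q n, fun h hh q hq => ?_⟩
  have hconj : Q.map (MulAut.conj q).toMonoidHom = Q := by
    ext y
    simp only [Subgroup.mem_map, MulAut.conj_apply, MulEquiv.coe_toMonoidHom]
    constructor
    · rintro ⟨z, hz, rfl⟩
      exact Q.mul_mem (Q.mul_mem hq hz) (Q.inv_mem hq)
    · intro hy
      exact ⟨q⁻¹ * y * q, by
        have := Q.mul_mem (Q.mul_mem (Q.inv_mem hq) hy) hq
        simpa [mul_assoc] using this, by group⟩
  have : (dser Q n).map (MulAut.conj q).toMonoidHom = dser Q n := by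
    rw [dser_map, hconj]
  rw [← this]
  exact ⟨h, hh, rfl⟩

/-- cardinality strictly decreases along strict inclusions (finite case). -/
theorem card_lt_of_lt [Finite G] {H K : Subgroup G} (h : H < K) :
    Nat.card ↥H < Nat.card ↥K := by
  have h1 : Nat.card ↥H = (H : Set G).ncard := Nat.card_coe_set_eq _
  have h2 : Nat.card ↥K = (K : Set G).ncard := Nat.card_coe_set_eq _
  rw [h1, h2]
  exact Set.ncard_lt_ncard (SetLike.coe_ssubset_coe.2 h) (Set.toFinite _)

theorem dser_stab {Q : Subgroup G} {n : ℕ} (h : dser Q (n + 1) = dser Q n) :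
    ∀ k, n ≤ k → dser Q k = dser Q n := by
  intro k hk
  induction k with
  | zero => have : n = 0 := by omega
            rw [this]
  | succ k ih =>
    rcases Nat.eq_or_lt_of_le hk with h' | h'
    · rw [← h']
    · have hk' : n ≤ k := by omega
      have hd := ih hk'
      show ⁅dser Q k, dser Q k⁆ = dser Q n
      rw [hd]
      exact h

/-- The perfect core of a subgroup of a finite group. -/
noncomputable def perfectCore [Finite G] (Q : Subgroup G) : Subgroup G := dser Q (Nat.card G)

theorem perfectCore_exists_stab [Finite G] (Q : Subgroup G) :
    ∃ n ≤ Nat.card G, dser Q (n + 1) = dser Q n := by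
  by_contra hcon
  push_neg at hcon
  have hstrict : ∀ n ≤ Nat.card G, dser Q (n + 1) < dser Q n := by
    intro n hn
    exact lt_of_le_of_ne (dser_succ_le Q n) (hcon n hn)
  have hcard : ∀ n ≤ Nat.card G + 1, Nat.card ↥(dser Q n) + n ≤ Nat.card ↥Q := by
    intro n
    induction n with
    | zero => intro _; simp [dser]
    | succ n ih =>
      intro hn
      have h1 := ih (by omega)
      have h2 := card_lt_of_lt (hstrict n (by omega))
      omega
  have h3 := hcard (Nat.card G + 1) le_rfl
  have h4 : 0 < Nat.card ↥(dser Q (Nat.card G + 1)) := Nat.card_pos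
  have h5 : Nat.card ↥Q ≤ Nat.card G :=
    Nat.card_le_card_of_injective _ Q.subtype_injective
  omega

theorem perfectCore_perfect [Finite G] (Q : Subgroup G) :
    ⁅perfectCore Q, perfectCore Q⁆ = perfectCore Q := by
  obtain ⟨n, hn, hstab⟩ := perfectCore_exists_stab Q
  have h1 : dser Q (Nat.card G) = dser Q n := dser_stab hstab _ hn
  have h2 : dser Q (Nat.card G + 1) = dser Q n := dser_stab hstab _ (by omega)
  show dser Q (Nat.card G + 1) = dser Q (Nat.card G)
  rw [h1, h2]

theorem perfectCore_le [Finite G] (Q : Subgroup G) : perfectCore Q ≤ Q := dser_le Q _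

theorem le_perfectCore [Finite G] {Q H : Subgroup G} (hle : H ≤ Q) (h : ⁅H, H⁆ = H) :
    H ≤ perfectCore Q := le_dser_of_perfect hle h _

theorem nIn_perfectCore [Finite G] (Q : Subgroup G) : NIn (perfectCore Q) Q := nIn_dser Q _

end SolComp
namespace SolComp

universe u

open scoped commutatorElement

variable {G : Type*} [Group G]

theorem commutator_eq_bot_iff' {H K : Subgroup G} :
    ⁅H, K⁆ = ⊥ ↔ ∀ h ∈ H, ∀ k ∈ K, k * h = h * k := by
  rw [Subgroup.commutator_eq_bot_iff_le_centralizer]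
  constructor
  · intro h x hx k hk
    exact Subgroup.mem_centralizer_iff.1 (h hx) k hk
  · intro h x hx
    exact Subgroup.mem_centralizer_iff.2 (fun k hk => h x hx k hk)

theorem simple_of_mulEquiv {P Q : Type*} [Group P] [Group Q] (e : P ≃* Q)
    (h : IsSimpleGroup P) : IsSimpleGroup Q := by
  haveI : Nontrivial P := h.toNontrivial
  haveI : Nontrivial Q := e.symm.toEquiv.nontrivial
  constructor
  intro N hN
  have hmap : (N.map e.symm.toMonoidHom).Normal := hN.map e.symm.toMonoidHom e.symm.surjective
  rcases h.eq_bot_or_eq_top_of_normal _ hmap with hb | ht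
  · left
    have := congrArg (Subgroup.map e.toMonoidHom) hb
    rwa [map_map_symm, Subgroup.map_bot] at this
  · right
    have := congrArg (Subgroup.map e.toMonoidHom) ht
    rwa [map_map_symm, Subgroup.map_top_of_surjective _ e.surjective] at this

theorem center_map {X Y : Type*} [Group X] [Group Y] (e : X ≃* Y) :
    (Subgroup.center X).map e.toMonoidHom = Subgroup.center Y := by
  ext y
  constructor
  · rintro ⟨z, hz, rfl⟩
    rw [Subgroup.mem_center_iff]
    intro g
    have := Subgroup.mem_center_iff.1 hz (e.symm g)
    calc g * e z = e (e.symm g * z) := by simp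
      _ = e (z * e.symm g) := by rw [this]
      _ = e z * g := by simp
  · intro hy
    refine ⟨e.symm y, ?_, by simp⟩
    show e.symm y ∈ Subgroup.center X
    rw [Subgroup.mem_center_iff]
    intro g
    have := Subgroup.mem_center_iff.1 hy (e g)
    calc g * e.symm y = e.symm (e g * y) := by simp
      _ = e.symm (y * e g) := by rw [this]
      _ = e.symm y * g := by simp

theorem quasisimple_of_mulEquiv {X Y : Type*} [Group X] [Group Y] (e : X ≃* Y)
    (h : IsQuasisimpleGroup X) : IsQuasisimpleGroup Y := by
  obtain ⟨h1, h2⟩ := h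
  constructor
  · rw [commutator_def, ← Subgroup.map_top_of_surjective e.toMonoidHom e.surjective,
      ← Subgroup.map_commutator, ← commutator_def, h1,
      Subgroup.map_top_of_surjective e.toMonoidHom e.surjective]
  · exact simple_of_mulEquiv
      (QuotientGroup.congr (Subgroup.center X) (Subgroup.center Y) e (center_map e)) h2

theorem commutator_top_of_surjective {X Y : Type*} [Group X] [Group Y] (f : X →* Y)
    (hf : Function.Surjective f) (h : commutator X = ⊤) : commutator Y = ⊤ := by
  rw [commutator_def, ← Subgroup.map_top_of_surjective f hf, ← Subgroup.map_commutator,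
    ← commutator_def, h, Subgroup.map_top_of_surjective f hf]

theorem commutator_mul_center_left {z : G} (hz : z ∈ Subgroup.center G) (x y : G) :
    ⁅x * z, y⁆ = ⁅x, y⁆ := by
  have h1 : z * y = y * z := (Subgroup.mem_center_iff.1 hz y).symm
  calc ⁅x * z, y⁆ = x * (z * y * z⁻¹) * x⁻¹ * y⁻¹ := by
        rw [commutatorElement_def]; group
    _ = ⁅x, y⁆ := by rw [h1, mul_inv_cancel_right, commutatorElement_def]

theorem commutator_mul_center_right {z : G} (hz : z ∈ Subgroup.center G) (x y : G) :
    ⁅x, y * z⁆ = ⁅x, y⁆ := by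
  have h1 : z * x⁻¹ = x⁻¹ * z := (Subgroup.mem_center_iff.1 hz x⁻¹).symm
  calc ⁅x, y * z⁆ = x * y * (z * x⁻¹ * z⁻¹) * y⁻¹ := by
        rw [commutatorElement_def]; group
    _ = ⁅x, y⁆ := by rw [h1, mul_inv_cancel_right, commutatorElement_def, mul_assoc x y,
        ← mul_assoc]

/-- In a quasisimple group, a normal subgroup is central or everything. -/
theorem normal_le_center_or_eq_top {X : Type*} [Group X] (hq : IsQuasisimpleGroup X)
    {N : Subgroup X} (hN : N.Normal) : N ≤ Subgroup.center X ∨ N = ⊤ := by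
  set Z := Subgroup.center X
  set f := QuotientGroup.mk' Z
  have hMnorm : (N.map f).Normal := hN.map f (QuotientGroup.mk'_surjective Z)
  rcases hq.2.eq_bot_or_eq_top_of_normal _ hMnorm with hb | ht
  · left
    intro x hx
    have : f x ∈ N.map f := ⟨x, hx, rfl⟩
    rw [hb, Subgroup.mem_bot] at this
    exact (QuotientGroup.eq_one_iff x).1 this
  · right
    have hsup : N ⊔ Z = ⊤ := by
      have h1 := Subgroup.comap_map_eq f N
      rw [ht] at h1
      rw [QuotientGroup.ker_mk'] at h1
      simpa using h1.symm
    have hdecomp : ∀ x : X, ∃ n ∈ N, ∃ z ∈ Z, x = n * z := by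
      intro x
      have : x ∈ (N : Set X) * (Z : Set X) := by
        rw [← Subgroup.mul_normal N Z, hsup]; trivial
      obtain ⟨n, hn, z, hz, rfl⟩ := this
      exact ⟨n, hn, z, hz, rfl⟩
    have hcomm : commutator X ≤ N := by
      rw [commutator_def, Subgroup.commutator_le]
      intro g1 _ g2 _
      obtain ⟨n, hn, z, hz, rfl⟩ := hdecomp g1
      obtain ⟨m, hm, w, hw, rfl⟩ := hdecomp g2
      rw [commutator_mul_center_left hz, commutator_mul_center_right hw,
        commutatorElement_def]
      exact N.mul_mem (N.mul_mem (N.mul_mem hn hm) (N.inv_mem hn)) (N.inv_mem hm)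
    rw [hq.1] at hcomm
    exact le_antisymm le_top hcomm

/-- In a quasisimple group, a subnormal subgroup is central or everything. -/
theorem snn_le_center_or_eq_top {X : Type*} [Group X] (hq : IsQuasisimpleGroup X) :
    ∀ (n : ℕ) {N : Subgroup X}, Snn n N ⊤ → N ≤ Subgroup.center X ∨ N = ⊤ := by
  intro n
  induction n with
  | zero =>
    intro N h
    obtain ⟨c, h0, hn, -⟩ := h
    right; rw [← h0, hn]
  | succ n ih =>
    intro N h
    obtain ⟨c, h0, hn, hc⟩ := h
    have hW : (c n).Normal := by
      have := hc n (by omega)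
      rw [hn] at this
      exact normal_of_nIn_top this
    rcases normal_le_center_or_eq_top hq hW with hcen | htop
    · left
      have : Snn n N (c n) := ⟨c, h0, rfl, fun i hi => hc i (by omega)⟩
      exact le_trans this.le hcen
    · exact ih ⟨c, h0, htop, fun i hi => hc i (by omega)⟩

/-- Wielandt: a quasisimple subnormal subgroup is contained in, or commutes with,
any normal subgroup. -/
theorem lemmaA :
    ∀ (n : ℕ) {X : Type u} [Group X] (L N : Subgroup X),
      IsQuasisimpleGroup ↥L → Snn n L ⊤ → N.Normal → L ≤ N ∨ ⁅L, N⁆ = ⊥ := by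
  intro n
  induction n with
  | zero =>
    intro X _ L N hq hsnn hN
    obtain ⟨c, h0, hn, -⟩ := hsnn
    have hL : L = ⊤ := by rw [← h0, hn]
    subst hL
    have hqX : IsQuasisimpleGroup X := quasisimple_of_mulEquiv Subgroup.topEquiv hq
    rcases normal_le_center_or_eq_top hqX hN with hcen | htop
    · right
      rw [commutator_eq_bot_iff']
      intro h _ k hk
      exact (Subgroup.mem_center_iff.1 (hcen hk) h).symm
    · left; rw [htop]
  | succ n ih =>
    intro X _ L N hq hsnn hN
    obtain ⟨c, h0, hn, hc⟩ := hsnn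
    set W := c n with hWdef
    have hWnorm : W.Normal := by
      have := hc n (by omega)
      rw [hn] at this
      exact normal_of_nIn_top this
    have hsnnW : Snn n L W := ⟨c, h0, rfl, fun i hi => hc i (by omega)⟩
    have hle : L ≤ W := hsnnW.le
    -- move into W
    have hsnn' : Snn n (L.subgroupOf W) ⊤ := hsnnW.subgroupOf
    have hq' : IsQuasisimpleGroup ↥(L.subgroupOf W) :=
      quasisimple_of_mulEquiv (Subgroup.subgroupOfEquivOfLe hle).symm hq
    have hN' : ((N ⊓ W).subgroupOf W).Normal := by
      constructor
      rintro ⟨x, hxW⟩ hx ⟨w, hwW⟩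
      rw [Subgroup.mem_subgroupOf] at hx ⊢
      exact ⟨hN.conj_mem x hx.1 w, W.mul_mem (W.mul_mem hwW hx.2) (W.inv_mem hwW)⟩
    rcases ih (L.subgroupOf W) ((N ⊓ W).subgroupOf W) hq' hsnn' hN' with hle' | hbot'
    · left
      intro x hx
      have : (⟨x, hle hx⟩ : ↥W) ∈ (N ⊓ W).subgroupOf W := hle' (Subgroup.mem_subgroupOf.2 hx)
      exact (Subgroup.mem_subgroupOf.1 this).1
    · -- elements of N ⊓ W commute with L
      have hcomm : ∀ y ∈ N ⊓ W, ∀ l ∈ L, l * y = y * l := by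
        intro y hy l hl
        have := commutator_eq_bot_iff'.1 hbot' ⟨l, hle hl⟩ (Subgroup.mem_subgroupOf.2 hl)
          ⟨y, hy.2⟩ (Subgroup.mem_subgroupOf.2 hy)
        simpa using (congrArg Subtype.val this).symm
      have hNL : ⁅N, L⁆ ≤ N ⊓ W := by
        rw [Subgroup.commutator_le]
        intro g1 hg1 g2 hg2
        constructor
        · have : g2 * g1⁻¹ * g2⁻¹ ∈ N := by
            have := hN.conj_mem g1⁻¹ (N.inv_mem hg1) g2
            simpa [mul_assoc] using this
          rw [commutatorElement_def]
          have := N.mul_mem hg1 this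
          simpa [mul_assoc] using this
        · have h1 : g1 * g2 * g1⁻¹ ∈ W := hWnorm.conj_mem g2 (hle hg2) g1
          rw [commutatorElement_def]
          have := W.mul_mem h1 (W.inv_mem (hle hg2))
          simpa [mul_assoc] using this
      have h1 : ⁅⁅L, N⁆, L⁆ = ⊥ := by
        rw [commutator_eq_bot_iff']
        intro x hx l hl
        have hx' : x ∈ N ⊓ W := by
          rw [Subgroup.commutator_comm] at hx
          exact hNL hx
        exact hcomm x hx' l hl
      have h2 : ⁅⁅N, L⁆, L⁆ = ⊥ := by
        rw [Subgroup.commutator_comm N L]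
        exact h1
      have h3 : ⁅⁅L, L⁆, N⁆ = ⊥ :=
        Subgroup.commutator_commutator_eq_bot_of_rotate h1 h2
      right
      rwa [commutator_top_iff.1 hq.1] at h3

/-- Distinct components commute. -/
theorem lemmaB :
    ∀ (n : ℕ) {X : Type u} [Group X] (L M : Subgroup X),
      IsQuasisimpleGroup ↥L → Snn n L ⊤ →
      IsQuasisimpleGroup ↥M → (∃ m, Snn m M ⊤) → L ≠ M → ⁅L, M⁆ = ⊥ := by
  intro n
  induction n with
  | zero =>
    intro X _ L M hqL hsnnL hqM hsnnM hne
    obtain ⟨c, h0, hn, -⟩ := hsnnL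
    have hL : L = ⊤ := by rw [← h0, hn]
    subst hL
    have hqX : IsQuasisimpleGroup X := quasisimple_of_mulEquiv Subgroup.topEquiv hqL
    obtain ⟨m, hm⟩ := hsnnM
    rcases snn_le_center_or_eq_top hqX m hm with hcen | htop
    · rw [commutator_eq_bot_iff']
      intro h _ k hk
      exact (Subgroup.mem_center_iff.1 (hcen hk) h).symm
    · exact absurd htop.symm hne
  | succ n ih =>
    intro X _ L M hqL hsnnL hqM hsnnM hne
    obtain ⟨c, h0, hn, hc⟩ := hsnnL
    set W := c n with hWdef
    have hWnorm : W.Normal := by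
      have := hc n (by omega)
      rw [hn] at this
      exact normal_of_nIn_top this
    have hsnnW : Snn n L W := ⟨c, h0, rfl, fun i hi => hc i (by omega)⟩
    have hle : L ≤ W := hsnnW.le
    obtain ⟨m, hmM⟩ := hsnnM
    rcases lemmaA m M W hqM hmM hWnorm with hMW | hbot
    · -- M ≤ W: descend into W
      have hsnnMW : Snn m M W := by
        have := hmM.inf_right W
        rwa [inf_eq_left.2 hMW, top_inf_eq] at this
      have hL' : Snn n (L.subgroupOf W) ⊤ := hsnnW.subgroupOf
      have hM' : Snn m (M.subgroupOf W) ⊤ := hsnnMW.subgroupOf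
      have hqL' := quasisimple_of_mulEquiv (Subgroup.subgroupOfEquivOfLe hle).symm hqL
      have hqM' := quasisimple_of_mulEquiv (Subgroup.subgroupOfEquivOfLe hMW).symm hqM
      have hne' : L.subgroupOf W ≠ M.subgroupOf W := by
        intro heq
        apply hne
        ext x
        constructor
        · intro hx
          have h2 : (⟨x, hle hx⟩ : ↥W) ∈ M.subgroupOf W := by
            rw [← heq]; exact Subgroup.mem_subgroupOf.2 hx
          exact Subgroup.mem_subgroupOf.1 h2
        · intro hx
          have h2 : (⟨x, hMW hx⟩ : ↥W) ∈ L.subgroupOf W := by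
            rw [heq]; exact Subgroup.mem_subgroupOf.2 hx
          exact Subgroup.mem_subgroupOf.1 h2
      have hbot' := ih (L.subgroupOf W) (M.subgroupOf W) hqL' hL' hqM' ⟨m, hM'⟩ hne'
      rw [commutator_eq_bot_iff'] at hbot' ⊢
      intro l hl k hk
      have := hbot' ⟨l, hle hl⟩ (Subgroup.mem_subgroupOf.2 hl)
        ⟨k, hMW hk⟩ (Subgroup.mem_subgroupOf.2 hk)
      exact congrArg Subtype.val this
    · rw [commutator_eq_bot_iff'] at hbot ⊢
      intro l hl k hk
      exact (hbot k hk l (hle hl)).symm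

end SolComp
namespace SolComp

variable {G : Type*} [Group G]

theorem eq_of_snn_of_forall_nIn :
    ∀ (n : ℕ) {G : Type*} [Group G] {H K : Subgroup G}, Snn n H K →
      (∀ M, H ≤ M → NIn M K → M = K) → H = K := by
  intro n
  induction n with
  | zero =>
    intro G _ H K h _
    obtain ⟨c, h0, hn, -⟩ := h
    rw [← h0, hn]
  | succ n ih =>
    intro G _ H K h hM
    obtain ⟨c, h0, hn, hc⟩ := h
    have hWK : NIn (c n) K := by
      have := hc n (by omega)
      rwa [hn] at this
    have hsnnW : Snn n H (c n) := ⟨c, h0, rfl, fun i hi => hc i (by omega)⟩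
    have hW : c n = K := hM (c n) hsnnW.le hWK
    exact ih (hW ▸ hsnnW) hM

theorem eq_of_snn_perfect_of_le_sup_solRadical [Finite G] {H K : Subgroup G} {n : ℕ}
    (hsnn : Snn n H K) (hperf : ⁅K, K⁆ = K) (hle : K ≤ H ⊔ solRadical G) : H = K := by
  refine eq_of_snn_of_forall_nIn n hsnn ?_
  intro M hHM hMK
  haveI hM' : (M.subgroupOf K).Normal := (nIn_iff hMK.1).1 hMK
  set Q := ↥K ⧸ M.subgroupOf K
  -- Q is perfect
  have hKperf : commutator ↥K = ⊤ := commutator_top_iff.2 hperf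
  have hQperf : commutator Q = ⊤ :=
    commutator_top_of_surjective _ (QuotientGroup.mk'_surjective _) hKperf
  -- Q is solvable
  have hKle : K ≤ M ⊔ solRadical G :=
    le_trans hle (sup_le_sup_right hHM _)
  have hQsolv : Group.IsSolvable Q := by
    let ψ : ↥(solRadical G ⊓ K) →* Q :=
      (QuotientGroup.mk' (M.subgroupOf K)).comp (Subgroup.inclusion inf_le_right)
    have hsurj : Function.Surjective ψ := by
      intro q
      induction q using QuotientGroup.induction_on with
      | H k =>
        have hk : (k : G) ∈ (M : Set G) * (solRadical G : Set G) := by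
          rw [← Subgroup.mul_normal M (solRadical G)]
          exact hKle k.2
        obtain ⟨mm, hmm, s, hs, hks⟩ := hk
        have hks' : mm * s = (k : G) := hks
        have hmK : mm ∈ K := hMK.1 hmm
        have hsK : s ∈ K := by
          have hseq : s = mm⁻¹ * (k : G) := by rw [← hks']; group
          rw [hseq]
          exact K.mul_mem (K.inv_mem hmK) k.2
        refine ⟨⟨s, hs, hsK⟩, ?_⟩
        show QuotientGroup.mk (⟨s, hsK⟩ : ↥K) = QuotientGroup.mk k
        rw [QuotientGroup.eq, Subgroup.mem_subgroupOf]
        show (s : G)⁻¹ * (k : G) ∈ M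
        have hval : s⁻¹ * (k : G) = s⁻¹ * mm * s := by rw [← hks']; group
        rw [hval]
        have hcj := hMK.2 mm hmm s⁻¹ (K.inv_mem hsK)
        simpa [mul_assoc] using hcj
    haveI : Group.IsSolvable ↥(solRadical G ⊓ K) := by
      haveI : Group.IsSolvable ↥(solRadical G) := solRadical_solvable G
      exact solvable_of_solvable_injective (Subgroup.inclusion_injective
        (inf_le_left : solRadical G ⊓ K ≤ solRadical G))
    exact solvable_of_surjective hsurj
  have hsub : Subsingleton Q := subsingleton_of_perfect_solvable hQperf hQsolv
  refine le_antisymm hMK.1 ?_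
  intro k hk
  have : QuotientGroup.mk (⟨k, hk⟩ : ↥K) = (1 : Q) := Subsingleton.elim _ _
  have hmem := (QuotientGroup.eq_one_iff _).1 this
  exact Subgroup.mem_subgroupOf.1 hmem

end SolComp
namespace SolComp

/-- Every nontrivial subnormal subgroup of a finite group with trivial solvable radical
contains a component. -/
theorem exists_component_le {X : Type*} [Group X] [Finite X]
    (hsol : solRadical X = ⊥) {S : Subgroup X} (hS : ∃ n, Snn n S ⊤) (hne : S ≠ ⊥) :
    ∃ L : Subgroup X, IsComponent L ∧ L ≤ S := by
  classical
  set T : Set (Subgroup X) := {L | L ≠ ⊥ ∧ L ≤ S ∧ ∃ m, Snn m L ⊤} with hT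
  have hST : S ∈ T := ⟨hne, le_rfl, hS⟩
  obtain ⟨L, hLT, hmin⟩ := Set.Finite.exists_minimalFor id T (Set.toFinite T) ⟨S, hST⟩
  obtain ⟨hLne, hLS, m, hLsnn⟩ := hLT
  haveI hnt : Nontrivial ↥L := (Subgroup.nontrivial_iff_ne_bot L).2 hLne
  -- key: normal subgroups of L are ⊥ or ⊤
  have key : ∀ N' : Subgroup ↥L, N'.Normal → N' = ⊥ ∨ N' = ⊤ := by
    intro N' hN'
    by_cases hb : N' = ⊥
    · exact Or.inl hb
    right
    set N := N'.map L.subtype with hN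
    have hNne : N ≠ ⊥ := by
      intro h
      exact hb ((Subgroup.map_eq_bot_iff_of_injective N' L.subtype_injective).1 h)
    have hNL : NIn N L := by
      refine ⟨Subgroup.map_subtype_le N', ?_⟩
      rintro x ⟨x', hx', rfl⟩ l hl
      have := hN'.conj_mem x' hx' ⟨l, hl⟩
      exact ⟨_, this, rfl⟩
    have hNT : N ∈ T := ⟨hNne, le_trans hNL.1 hLS, 1 + m, (snn_of_nIn hNL).trans hLsnn⟩
    have : id N = id L := le_antisymm hNL.1 (hmin hNT (by exact hNL.1 : id N ≤ id L))
    have hNL' : N = L := this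
    apply Subgroup.map_injective L.subtype_injective
    rw [hN] at hNL'
    rw [hNL', ← MonoidHom.range_eq_map, Subgroup.range_subtype]
  -- L is nonabelian
  have habel : ¬ ∀ x y : ↥L, x * y = y * x := by
    intro hab
    have hsolv : Group.IsSolvable ↥L := by
      refine ⟨1, ?_⟩
      rw [derivedSeries_succ, derivedSeries_zero]
      rw [commutator_eq_bot_iff']
      intro h _ k _
      exact hab k h
    have := snn_solvable_le_solRadical m L hLsnn hsolv
    rw [hsol, le_bot_iff] at this
    exact hLne this
  have hsimple : IsSimpleGroup ↥L := ⟨key⟩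
  -- commutator = ⊤
  have hcommut : commutator ↥L = ⊤ := by
    rcases key (commutator ↥L) (by rw [commutator_def]; infer_instance) with hb | ht
    · exfalso
      apply habel
      intro x y
      have h2 : ⁅(⊤ : Subgroup ↥L), ⊤⁆ = ⊥ := hb
      exact (commutator_eq_bot_iff'.1 h2 y trivial x trivial)
    · exact ht
  -- center = ⊥
  have hcen : Subgroup.center ↥L = ⊥ := by
    rcases key _ (Subgroup.center ↥L).normal_of_characteristic with hb | ht
    · exact hb
    · exfalso
      apply habel
      intro x y
      have hx : x ∈ Subgroup.center ↥L := ht ▸ trivial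
      exact (Subgroup.mem_center_iff.1 hx y).symm
  refine ⟨L, ⟨isSubnormal_iff_snn.2 ⟨m, hLsnn⟩, hcommut, ?_⟩, hLS⟩
  exact simple_of_mulEquiv
    ((QuotientGroup.quotientMulEquivOfEq hcen).trans QuotientGroup.quotientBot).symm hsimple

end SolComp
namespace SolComp

variable {G : Type*} [Group G]

theorem quasisimple_nonabelian {X : Type*} [Group X] (h : IsQuasisimpleGroup X) :
    ¬ ∀ x y : X, x * y = y * x := by
  intro hab
  have hcen : Subgroup.center X = ⊤ := by
    rw [eq_top_iff]
    intro x _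
    exact Subgroup.mem_center_iff.2 fun g => hab g x
  haveI : Subsingleton (X ⧸ Subgroup.center X) := by
    constructor
    intro a b
    induction a using QuotientGroup.induction_on with
    | H a =>
    induction b using QuotientGroup.induction_on with
    | H b =>
    rw [QuotientGroup.eq]
    rw [hcen]
    trivial
  exact not_subsingleton_iff_nontrivial.2 h.2.toNontrivial ‹_›

theorem smul_eq_map (e : MulAut G) (H : Subgroup G) : e • H = H.map e.toMonoidHom := rfl

theorem mem_smul_iff {e : MulAut G} {H : Subgroup G} {x : G} :
    x ∈ e • H ↔ ∃ h ∈ H, e h = x := by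
  rw [Subgroup.mem_smul_pointwise_iff_exists]
  rfl

theorem smul_top (e : MulAut G) : e • (⊤ : Subgroup G) = ⊤ := by
  rw [smul_eq_map]
  exact Subgroup.map_top_of_surjective _ e.surjective

theorem Snn.smul {n : ℕ} {H K : Subgroup G} (e : MulAut G) (h : Snn n H K) :
    Snn n (e • H) (e • K) := by
  rw [smul_eq_map, smul_eq_map]
  exact h.map e.toMonoidHom

theorem smul_perfect {C : Subgroup G} (e : MulAut G) (h : ⁅C, C⁆ = C) :
    ⁅e • C, e • C⁆ = e • C := by
  rw [smul_eq_map, ← Subgroup.map_commutator, h]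

theorem isSubnormal_smul {H : Subgroup G} (e : MulAut G) (h : IsSubnormal H) :
    IsSubnormal (e • H) := by
  rw [isSubnormal_iff_snn] at h ⊢
  obtain ⟨n, hn⟩ := h
  refine ⟨n, ?_⟩
  have := hn.smul e
  rwa [smul_top] at this

theorem quasisimple_smul {L : Subgroup G} (e : MulAut G) (h : IsQuasisimpleGroup ↥L) :
    IsQuasisimpleGroup ↥(e • L) := by
  rw [smul_eq_map]
  exact quasisimple_of_mulEquiv (Subgroup.equivMapOfInjective L e.toMonoidHom e.injective) h

theorem isComponent_smul {L : Subgroup G} (e : MulAut G) (h : IsComponent L) :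
    IsComponent (e • L) :=
  ⟨isSubnormal_smul e h.1, quasisimple_smul e h.2⟩

theorem conj_smul_eq_of_mem_normalizer {L : Subgroup G} {y : G} (hy : y ∈ Subgroup.normalizer (L : Set G)) :
    MulAut.conj y • L = L := by
  ext x
  rw [mem_smul_iff]
  rw [Subgroup.mem_normalizer_iff] at hy
  constructor
  · rintro ⟨h, hh, rfl⟩
    exact (hy h).1 hh
  · intro hx
    refine ⟨y⁻¹ * x * y, ?_, by simp [MulAut.conj_apply]; group⟩
    have := (hy (y⁻¹ * x * y)).2
    apply this
    have : y * (y⁻¹ * x * y) * y⁻¹ = x := by group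
    rwa [this]

/-- every element of the layer normalizes every component. -/
theorem component_conj_eq {Y : Type*} [Group Y] [Finite Y] {L : Subgroup Y}
    (hL : IsComponent L) {y : Y} (hy : y ∈ sSup {K : Subgroup Y | IsComponent K}) :
    MulAut.conj y • L = L := by
  apply conj_smul_eq_of_mem_normalizer
  revert y
  have : sSup {K : Subgroup Y | IsComponent K} ≤ Subgroup.normalizer (L : Set Y) := by
    apply sSup_le
    intro K hK
    by_cases hKL : K = L
    · subst hKL
      exact Subgroup.le_normalizer
    · have hcomm : ⁅K, L⁆ = ⊥ := by
        obtain ⟨m, hm⟩ := isSubnormal_iff_snn.1 hK.1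
        exact lemmaB m K L hK.2 hm hL.2 (isSubnormal_iff_snn.1 hL.1) hKL
      rw [commutator_eq_bot_iff'] at hcomm
      intro k hk
      rw [Subgroup.mem_normalizer_iff]
      intro l
      constructor
      · intro hl
        have : l * k = k * l := hcomm k hk l hl
        have h2 : k * l * k⁻¹ = l := by rw [← this]; group
        rwa [h2]
      · intro hl
        have h3 := hcomm k hk _ hl
        have h4 : l = k * l * k⁻¹ := by
          have h5 : k * l = k * (k * l * k⁻¹) := by
            calc k * l = (k * l * k⁻¹) * k := by group
              _ = k * (k * l * k⁻¹) := h3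
          exact mul_left_cancel h5
        rwa [h4]
  exact fun y hy => this hy

end SolComp
namespace SolComp

variable {G : Type*} [Group G]

theorem layer_normal' {Y : Type*} [Group Y] : (sSup {K : Subgroup Y | IsComponent K}).Normal := by
  constructor
  intro n hn g
  have h : sSup {K : Subgroup Y | IsComponent K} ≤
      (sSup {K : Subgroup Y | IsComponent K}).comap (MulAut.conj g).toMonoidHom := by
    apply sSup_le
    intro K hK x hx
    apply Subgroup.mem_comap.mpr
    have hmem : (MulAut.conj g) x ∈ MulAut.conj g • K := mem_smul_iff.2 ⟨x, hx, rfl⟩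
    have hKs : (MulAut.conj g • K) ∈ {K : Subgroup Y | IsComponent K} :=
      isComponent_smul (MulAut.conj g) hK
    exact le_sSup hKs hmem
  simpa [MulAut.conj_apply] using h hn

theorem map_conj_smul {Y : Type*} [Group Y] (ψ : G →* Y) (x : G) (H : Subgroup G) :
    (MulAut.conj x • H).map ψ = MulAut.conj (ψ x) • H.map ψ := by
  ext y
  constructor
  · rintro ⟨z, hz, rfl⟩
    obtain ⟨h, hh, rfl⟩ := mem_smul_iff.1 hz
    apply mem_smul_iff.2
    exact ⟨ψ h, ⟨h, hh, rfl⟩, by simp [MulAut.conj_apply, map_mul]⟩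
  · intro hy
    obtain ⟨z, ⟨h, hh, rfl⟩, rfl⟩ := mem_smul_iff.1 hy
    exact ⟨x * h * x⁻¹, mem_smul_iff.2 ⟨h, hh, rfl⟩, by simp [MulAut.conj_apply, map_mul]⟩

theorem map_mk'_smul [Finite G] (e : MulAut G) (H : Subgroup G) :
    ∃ eb : MulAut (G ⧸ solRadical G),
      (e • H).map (QuotientGroup.mk' (solRadical G)) =
        eb • H.map (QuotientGroup.mk' (solRadical G)) := by
  have hmap : Subgroup.map (↑(e : G ≃* G)) (solRadical G) = solRadical G := solRadical_map e
  refine ⟨QuotientGroup.congr (solRadical G) (solRadical G) e hmap, ?_⟩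
  have hcomp : (QuotientGroup.mk' (solRadical G)).comp e.toMonoidHom =
      (QuotientGroup.congr (solRadical G) (solRadical G) e hmap).toMonoidHom.comp
        (QuotientGroup.mk' (solRadical G)) := by
    ext x
    exact (QuotientGroup.congr_mk' (solRadical G) (solRadical G) e hmap x).symm
  rw [smul_eq_map, smul_eq_map, Subgroup.map_map, Subgroup.map_map, hcomp]

theorem sup_solRadical_eq_comap_map (C : Subgroup G) :
    C ⊔ solRadical G =
      (C.map (QuotientGroup.mk' (solRadical G))).comap (QuotientGroup.mk' (solRadical G)) := by
  rw [Subgroup.comap_map_eq, QuotientGroup.ker_mk']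

theorem map_inf_comap {Y : Type*} [Group Y] (ψ : G →* Y) (H : Subgroup G) (M : Subgroup Y) :
    (H ⊓ M.comap ψ).map ψ = H.map ψ ⊓ M := by
  ext y
  constructor
  · rintro ⟨z, ⟨hz1, hz2⟩, rfl⟩
    exact ⟨⟨z, hz1, rfl⟩, hz2⟩
  · rintro ⟨⟨z, hz, rfl⟩, hy⟩
    exact ⟨z, ⟨hz, hy⟩, rfl⟩

theorem perfect_snn_unique [Finite G] {C D : Subgroup G}
    (hCp : ⁅C, C⁆ = C) (hDp : ⁅D, D⁆ = D)
    (hCs : ∃ n, Snn n C ⊤) (hDs : ∃ n, Snn n D ⊤)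
    (h : C ⊔ solRadical G = D ⊔ solRadical G) : C = D := by
  have key : ∀ E : Subgroup G, ⁅E, E⁆ = E → (∃ n, Snn n E ⊤) →
      E ⊔ solRadical G = C ⊔ solRadical G → E = perfectCore (C ⊔ solRadical G) := by
    rintro E hEp ⟨n, hEs⟩ hE
    set P := C ⊔ solRadical G with hP
    have hEP : E ≤ P := by rw [← hE]; exact le_sup_left
    have h1 : E ≤ perfectCore P := le_perfectCore hEP hEp
    have h2 : Snn n E (perfectCore P) := by
      have := hEs.inf_right (perfectCore P)
      rwa [inf_eq_left.2 h1, top_inf_eq] at this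
    refine eq_of_snn_perfect_of_le_sup_solRadical h2 (perfectCore_perfect P) ?_
    calc perfectCore P ≤ P := perfectCore_le P
      _ = E ⊔ solRadical G := hE.symm
  rw [key C hCp hCs rfl, key D hDp hDs h.symm]

theorem isSolComponent_smul [Finite G] {C : Subgroup G} (e : MulAut G)
    (h : IsSolComponent C) : IsSolComponent (e • C) := by
  obtain ⟨h1, h2, h3⟩ := h
  refine ⟨isSubnormal_smul e h1, ?_, ?_⟩
  · rw [commutator_top_iff] at h2 ⊢
    exact smul_perfect e h2
  · obtain ⟨eb, heb⟩ := map_mk'_smul e C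
    rw [heb]
    exact isComponent_smul eb h3

theorem conj_solComponent_eq [Finite G] {D : Subgroup G} (hD : IsSolComponent D) {x : G}
    (hx : (QuotientGroup.mk' (solRadical G)) x ∈
      sSup {K : Subgroup (G ⧸ solRadical G) | IsComponent K}) :
    MulAut.conj x • D = D := by
  have himg : (MulAut.conj x • D).map (QuotientGroup.mk' (solRadical G)) =
      D.map (QuotientGroup.mk' (solRadical G)) := by
    rw [map_conj_smul]
    exact component_conj_eq hD.2.2 hx
  refine perfect_snn_unique (smul_perfect _ (commutator_top_iff.1 hD.2.1))
    (commutator_top_iff.1 hD.2.1) ?_ (isSubnormal_iff_snn.1 hD.1) ?_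
  · obtain ⟨n, hn⟩ := isSubnormal_iff_snn.1 hD.1
    refine ⟨n, ?_⟩
    have := hn.smul (MulAut.conj x)
    rwa [smul_top] at this
  · rw [sup_solRadical_eq_comap_map, sup_solRadical_eq_comap_map, himg]

end SolComp
namespace SolComp

variable {A G : Type*} [Group A] [Group G] [Finite G] (φ : A →* MulAut G)

theorem smul_iSup_eq (C : Subgroup G) (a : A) :
    φ a • (⨆ b : A, φ b • C) = ⨆ b : A, φ b • C := by
  have h1 : φ a • (⨆ b : A, φ b • C) = ⨆ b : A, φ a • (φ b • C) := by
    rw [smul_eq_map, (Subgroup.gc_map_comap (φ a).toMonoidHom).l_iSup]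
    exact iSup_congr fun b => (smul_eq_map _ _).symm
  rw [h1]
  apply le_antisymm
  · refine iSup_le fun b => ?_
    rw [smul_smul, ← map_mul]
    exact le_iSup (fun b => φ b • C) (a * b)
  · refine iSup_le fun b => ?_
    have h2 : φ b • C = φ a • (φ (a⁻¹ * b) • C) := by
      rw [smul_smul, ← map_mul, mul_inv_cancel_left]
    rw [h2]
    exact le_iSup (fun b => φ a • (φ b • C)) (a⁻¹ * b)

theorem join_subnormal {C : Subgroup G} (hC : IsSolComponent C) :
    IsSubnormal (⨆ b : A, φ b • C) := by
  set f := QuotientGroup.mk' (solRadical G) with hf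
  set E := sSup {K : Subgroup (G ⧸ solRadical G) | IsComponent K} with hE
  set P := E.comap f with hP
  set K := ⨆ b : A, φ b • C with hK
  have hCb : ∀ b : A, IsSolComponent (φ b • C) := fun b => isSolComponent_smul (φ b) hC
  have hKP : K ≤ P := by
    refine iSup_le fun b => ?_
    calc φ b • C ≤ ((φ b • C).map f).comap f := Subgroup.le_comap_map f _
      _ ≤ P := Subgroup.comap_mono (le_sSup (hCb b).2.2)
  have hNIn1 : NIn K P := by
    refine ⟨hKP, ?_⟩
    intro h hh x hx
    have hxE : f x ∈ E := Subgroup.mem_comap.1 hx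
    have hconjK : MulAut.conj x • K = K := by
      have h1 : MulAut.conj x • K = ⨆ b : A, MulAut.conj x • (φ b • C) := by
        rw [hK, smul_eq_map, (Subgroup.gc_map_comap _).l_iSup]
        exact iSup_congr fun b => (smul_eq_map _ _).symm
      rw [h1]
      exact iSup_congr fun b => conj_solComponent_eq (hCb b) hxE
    rw [← hconjK]
    exact mem_smul_iff.2 ⟨h, hh, rfl⟩
  have hNIn2 : NIn P ⊤ := by
    haveI hEn : E.Normal := layer_normal'
    haveI : P.Normal := hEn.comap f
    exact ⟨le_top, fun h hh g _ => this.conj_mem h hh g⟩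
  exact isSubnormal_iff_snn.2 ⟨2, (snn_of_nIn hNIn1).trans (snn_of_nIn hNIn2)⟩

theorem solComponent_not_solvable {C : Subgroup G} (hC : IsSolComponent C)
    (h : Group.IsSolvable ↥C) : False := by
  have : Group.IsSolvable ↥(C.map (QuotientGroup.mk' (solRadical G))) :=
    solvable_of_surjective (MonoidHom.subgroupMap_surjective _ C)
  exact quasisimple_not_solvable hC.2.2.2 this

theorem join_not_solvable {C : Subgroup G} (hC : IsSolComponent C)
    (h : Group.IsSolvable ↥(⨆ b : A, φ b • C)) : False := by
  have hle : C ≤ ⨆ b : A, φ b • C := by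
    have h1 : C = φ (1 : A) • C := by rw [map_one, one_smul]
    exact le_of_eq_of_le h1 (le_iSup (fun b => φ b • C) 1)
  exact solComponent_not_solvable hC
    (solvable_of_solvable_injective (Subgroup.inclusion_injective hle))

theorem join_perfect {C : Subgroup G} (hC : IsSolComponent C) :
    ⁅⨆ b : A, φ b • C, ⨆ b : A, φ b • C⁆ = ⨆ b : A, φ b • C := by
  apply le_antisymm
  · rw [Subgroup.commutator_le]
    intro g1 h1 g2 h2
    exact Subgroup.mul_mem _ (Subgroup.mul_mem _ (Subgroup.mul_mem _ h1 h2)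
      (Subgroup.inv_mem _ h1)) (Subgroup.inv_mem _ h2)
  · refine iSup_le fun b => ?_
    have hp : ⁅φ b • C, φ b • C⁆ = φ b • C := smul_perfect _ (commutator_top_iff.1 hC.2.1)
    rw [← hp]
    exact Subgroup.commutator_mono (le_iSup (fun b => φ b • C) b) (le_iSup (fun b => φ b • C) b)

theorem join_minimal {C : Subgroup G} (hC : IsSolComponent C) {S : Subgroup G}
    (hSinv : ∀ a : A, φ a • S = S) (hSsnn : IsSubnormal S) (hSns : ¬ Group.IsSolvable ↥S)
    (hSle : S ≤ ⨆ b : A, φ b • C) : S = ⨆ b : A, φ b • C := by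
  set f := QuotientGroup.mk' (solRadical G) with hf
  set K := ⨆ b : A, φ b • C with hK
  obtain ⟨n, hSn⟩ := isSubnormal_iff_snn.1 hSsnn
  have hSbar_ne : S.map f ≠ ⊥ := by
    intro hbot
    apply hSns
    have hle : S ≤ solRadical G := by
      intro x hx
      have hx2 : f x ∈ S.map f := ⟨x, hx, rfl⟩
      rw [hbot, Subgroup.mem_bot] at hx2
      exact (QuotientGroup.eq_one_iff x).1 hx2
    haveI : Group.IsSolvable ↥(solRadical G) := solRadical_solvable G
    exact solvable_of_solvable_injective (Subgroup.inclusion_injective hle)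
  have hSbar_snn : ∃ m, Snn m (S.map f) ⊤ := by
    refine ⟨n, ?_⟩
    have := hSn.map f
    rwa [Subgroup.map_top_of_surjective f (QuotientGroup.mk'_surjective _)] at this
  obtain ⟨L, hL, hLS⟩ := exists_component_le (solRadical_quotient_eq_bot G) hSbar_snn hSbar_ne
  have hKbar : K.map f = ⨆ b : A, (φ b • C).map f := by
    rw [hK, (Subgroup.gc_map_comap f).l_iSup]
  have hexists : ∃ b : A, (φ b • C).map f = L := by
    by_contra hcon
    push_neg at hcon
    apply quasisimple_nonabelian hL.2
    have hcent : K.map f ≤ Subgroup.centralizer (L : Set (G ⧸ solRadical G)) := by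
      rw [hKbar]
      refine iSup_le fun b => ?_
      intro x hx
      rw [Subgroup.mem_centralizer_iff]
      intro y hy
      have hDb : IsComponent ((φ b • C).map f) := (isSolComponent_smul (φ b) hC).2.2
      obtain ⟨mD, hmD⟩ := isSubnormal_iff_snn.1 hDb.1
      have hbcomm : ⁅(φ b • C).map f, L⁆ = ⊥ :=
        lemmaB mD _ L hDb.2 hmD hL.2 (isSubnormal_iff_snn.1 hL.1) (hcon b)
      rw [commutator_eq_bot_iff'] at hbcomm
      exact hbcomm x hx y hy
    intro u v
    have huK : (u : G ⧸ solRadical G) ∈ K.map f :=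
      Subgroup.map_mono hSle (hLS u.2)
    have hucent := Subgroup.mem_centralizer_iff.1 (hcent huK)
    have := hucent (v : G ⧸ solRadical G) v.2
    exact Subtype.ext (by simpa using this.symm)
  obtain ⟨b, hb⟩ := hexists
  have hCb_le : φ b • C ≤ S ⊔ solRadical G := by
    calc φ b • C ≤ ((φ b • C).map f).comap f := Subgroup.le_comap_map f _
      _ = L.comap f := by rw [hb]
      _ ≤ (S.map f).comap f := Subgroup.comap_mono hLS
      _ = S ⊔ solRadical G := by rw [Subgroup.comap_map_eq, QuotientGroup.ker_mk']
  have hKle : K ≤ S ⊔ solRadical G := by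
    refine iSup_le fun a => ?_
    have hmove : φ a • C = φ (a * b⁻¹) • (φ b • C) := by
      rw [smul_smul, ← map_mul, inv_mul_cancel_right]
    rw [hmove]
    have hsup : φ (a * b⁻¹) • (S ⊔ solRadical G) = S ⊔ solRadical G := by
      have hstep : φ (a * b⁻¹) • (S ⊔ solRadical G) =
          (φ (a * b⁻¹) • S) ⊔ (φ (a * b⁻¹) • solRadical G) := by
        rw [smul_eq_map, smul_eq_map, smul_eq_map, Subgroup.map_sup]
      rw [hstep, hSinv (a * b⁻¹)]
      have : φ (a * b⁻¹) • solRadical G = solRadical G := by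
        rw [smul_eq_map]
        exact solRadical_map (φ (a * b⁻¹) : G ≃* G)
      rw [this]
    calc φ (a * b⁻¹) • (φ b • C) ≤ φ (a * b⁻¹) • (S ⊔ solRadical G) := by
          rw [smul_eq_map, smul_eq_map]
          exact Subgroup.map_mono hCb_le
      _ = S ⊔ solRadical G := hsup
  have hSK : Snn n S K := by
    have := hSn.inf_right K
    rwa [inf_eq_left.2 hSle, top_inf_eq] at this
  exact eq_of_snn_perfect_of_le_sup_solRadical hSK (join_perfect φ hC) hKle

theorem exists_solComponent_of_minimal {K : Subgroup G}
    (hKsnn : IsSubnormal K) (hKns : ¬ Group.IsSolvable ↥K) :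
    ∃ C : Subgroup G, IsSolComponent C ∧ C ≤ K := by
  set f := QuotientGroup.mk' (solRadical G) with hf
  obtain ⟨n, hKn⟩ := isSubnormal_iff_snn.1 hKsnn
  have hKbar_ne : K.map f ≠ ⊥ := by
    intro hbot
    apply hKns
    have hle : K ≤ solRadical G := by
      intro x hx
      have hx2 : f x ∈ K.map f := ⟨x, hx, rfl⟩
      rw [hbot, Subgroup.mem_bot] at hx2
      exact (QuotientGroup.eq_one_iff x).1 hx2
    haveI : Group.IsSolvable ↥(solRadical G) := solRadical_solvable G
    exact solvable_of_solvable_injective (Subgroup.inclusion_injective hle)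
  have hKbar_snn : ∃ m, Snn m (K.map f) ⊤ := by
    refine ⟨n, ?_⟩
    have := hKn.map f
    rwa [Subgroup.map_top_of_surjective f (QuotientGroup.mk'_surjective _)] at this
  obtain ⟨L, hL, hLK⟩ := exists_component_le (solRadical_quotient_eq_bot G) hKbar_snn hKbar_ne
  obtain ⟨m, hLm⟩ := isSubnormal_iff_snn.1 hL.1
  set Q := K ⊓ L.comap f with hQ
  have hQsnn : Snn (n + m) Q ⊤ := by
    have h1 : Snn n Q (L.comap f) := by
      have := hKn.inf_right (L.comap f)
      rwa [top_inf_eq] at this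
    have h2 : Snn m (L.comap f) ⊤ := by
      have := hLm.comap f
      rwa [Subgroup.comap_top] at this
    exact h1.trans h2
  have hQmap : Q.map f = L := by
    rw [hQ, map_inf_comap]
    exact inf_eq_right.2 hLK
  have hCsnn : Snn (1 + (n + m)) (perfectCore Q) ⊤ :=
    (snn_of_nIn (nIn_perfectCore Q)).trans hQsnn
  have hCmap : (perfectCore Q).map f = L := by
    rw [perfectCore, dser_map, hQmap]
    exact dser_eq_self_of_perfect (commutator_top_iff.1 hL.2.1) _
  refine ⟨perfectCore Q, ⟨isSubnormal_iff_snn.2 ⟨_, hCsnn⟩,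
    commutator_top_iff.2 (perfectCore_perfect Q), ?_⟩,
    le_trans (perfectCore_le Q) inf_le_left⟩
  rw [hf] at hCmap
  rw [hCmap]
  exact hL

end SolComp
/-- `K` is an `(A,sol)`-component of `G` (the subgroup generated by
the `A`-orbit of some sol-component of `G`) iff `K` is minimal among `A`-invariant
nonsolvable subnormal subgroups of `G`. -/
theorem isASolComponent_iff_minimal_invariant_nonsolvable_subnormal
    {A G : Type*} [Group A] [Group G] [Finite G] (φ : A →* MulAut G) (K : Subgroup G) :
    (∃ C : Subgroup G, IsSolComponent C ∧ K = ⨆ a : A, φ a • C) ↔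
      ((∀ a : A, φ a • K = K) ∧ IsSubnormal K ∧ ¬ IsSolvable ↥K ∧
        ∀ S : Subgroup G, (∀ a : A, φ a • S = S) → IsSubnormal S → ¬ IsSolvable ↥S →
          S ≤ K → S = K) := by
  constructor
  · rintro ⟨C, hC, rfl⟩
    refine ⟨SolComp.smul_iSup_eq φ C, SolComp.join_subnormal φ hC,
      fun h => SolComp.join_not_solvable φ hC h,
      fun S h1 h2 h3 h4 => SolComp.join_minimal φ hC h1 h2 h3 h4⟩
  · rintro ⟨hinv, hsnn, hns, hmin⟩
    obtain ⟨C, hC, hCK⟩ := SolComp.exists_solComponent_of_minimal hsnn hns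
    refine ⟨C, hC, ?_⟩
    have hle : (⨆ a : A, φ a • C) ≤ K := by
      refine iSup_le fun a => ?_
      have : φ a • C ≤ φ a • K := by
        rw [SolComp.smul_eq_map, SolComp.smul_eq_map]
        exact Subgroup.map_mono hCK
      rw [hinv a] at this
      exact this
    exact (hmin _ (SolComp.smul_iSup_eq φ C) (SolComp.join_subnormal φ hC)
      (fun h => SolComp.join_not_solvable φ hC h) hle).symm
end

section
/- Let r be a prime and let A be a finite elementary abelian r-group (an abelian group in which every element a satisfies a^r = 1) acting by automorphisms on the finite group K, with the orders of A and K coprime. Suppose K is A-quasisimple. Then for every a ∈ A, the subgroup [K,a] generated by all elements k⁻¹·a(k) with k ∈ K is either the trivial subgroup or all of K. -/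
open Pointwise
open scoped commutatorElement

/-- Let `r` be a prime and `A` a finite elementary abelian `r`-group
acting coprimely by automorphisms on the finite group `K`.  If `K` is
`A`-quasisimple then, for every `a ∈ A`, the subgroup `[K,a]` generated by the
elements `k⁻¹ · a(k)` is trivial or all of `K`. -/
theorem commutator_with_automorphism_of_aQuasisimple_eq_bot_or_top
    {r : ℕ} (hr : r.Prime) {A K : Type*} [CommGroup A] [Finite A] [Group K] [Finite K]
    (hA : ∀ a : A, a ^ r = 1) (φ : A →* MulAut K)
    (hcop : (Nat.card A).Coprime (Nat.card K))
    (hqs : IsAQuasisimple φ) (a : A) :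
    Subgroup.closure {x : K | ∃ k : K, x = k⁻¹ * φ a k} = ⊥ ∨
      Subgroup.closure {x : K | ∃ k : K, x = k⁻¹ * φ a k} = ⊤ := by
  classical
  set S : Set K := {x : K | ∃ k : K, x = k⁻¹ * φ a k} with hS
  set N : Subgroup K := Subgroup.closure S with hNdef
  -- N is invariant under every φ b
  have hNinv : ∀ b : A, ∀ n ∈ N, φ b n ∈ N := by
    intro b n hn
    induction hn using Subgroup.closure_induction with
    | mem x hx =>
      obtain ⟨k, rfl⟩ := hx
      apply Subgroup.subset_closure
      refine ⟨φ b k, ?_⟩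
      have hcomm : φ b (φ a k) = φ a (φ b k) := by
        have : φ (b * a) = φ (a * b) := by rw [mul_comm]
        have := congrArg (fun e : MulAut K => e k) this
        simpa [map_mul] using this
      simp [map_mul, map_inv, hcomm]
    | one => simpa using N.one_mem
    | mul x y hx hy ihx ihy => simpa [map_mul] using N.mul_mem ihx ihy
    | inv x hx ihx => simpa [map_inv] using N.inv_mem ihx
  -- N is normal
  have hN : N.Normal := by
    constructor
    intro n hn g
    induction hn using Subgroup.closure_induction with
    | mem x hx =>
      obtain ⟨k, rfl⟩ := hx
      have h1 : ((k * g⁻¹)⁻¹ * φ a (k * g⁻¹)) ∈ N :=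
        Subgroup.subset_closure ⟨k * g⁻¹, rfl⟩
      have h2 : ((g⁻¹)⁻¹ * φ a g⁻¹) ∈ N := Subgroup.subset_closure ⟨g⁻¹, rfl⟩
      have : g * (k⁻¹ * φ a k) * g⁻¹ =
          ((k * g⁻¹)⁻¹ * φ a (k * g⁻¹)) * ((g⁻¹)⁻¹ * φ a g⁻¹)⁻¹ := by
        simp only [map_mul, map_inv]
        group
      rw [this]
      exact N.mul_mem h1 (N.inv_mem h2)
    | one => simpa using N.one_mem
    | mul x y hx hy ihx ihy =>
      have h := N.mul_mem ihx ihy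
      have e : g * x * g⁻¹ * (g * y * g⁻¹) = g * (x * y) * g⁻¹ := by group
      rwa [e] at h
    | inv x hx ihx =>
      have h := N.inv_mem ihx
      have e : (g * x * g⁻¹)⁻¹ = g * x⁻¹ * g⁻¹ := by group
      rwa [e] at h
  -- image in K ⧸ Z(K)
  set mk' : K →* K ⧸ Subgroup.center K := QuotientGroup.mk' (Subgroup.center K) with hmk
  set Nbar : Subgroup (K ⧸ Subgroup.center K) := N.map mk' with hNbar
  have hNbarNormal : Nbar.Normal := hN.map mk' (QuotientGroup.mk'_surjective _)
  have hNbarInv : ∀ b : A, ((centerQuotHom K).comp φ) b • Nbar = Nbar := by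
    have key : ∀ b : A, ∀ x ∈ Nbar, ((centerQuotHom K).comp φ) b x ∈ Nbar := by
      intro b x hx
      obtain ⟨n, hn, rfl⟩ := hx
      exact ⟨φ b n, hNinv b n hn, rfl⟩
    intro b
    ext x
    rw [Subgroup.mem_pointwise_smul_iff_inv_smul_mem]
    constructor
    · intro h
      have := key b _ h
      simpa [MulAut.smul_def] using this
    · intro h
      have := key b⁻¹ x h
      simpa [MulAut.smul_def, map_inv] using this
  rcases hqs.2.2 Nbar hNbarNormal hNbarInv with hbot | htop
  · -- N ≤ center K, so k ↦ k⁻¹ * φ a k is a homomorphism into the center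
    left
    have hle : N ≤ Subgroup.center K := by
      have := (Subgroup.map_eq_bot_iff _).mp hbot
      rwa [hmk, QuotientGroup.ker_mk'] at this
    have hcen : ∀ k : K, k⁻¹ * φ a k ∈ Subgroup.center K := fun k =>
      hle (Subgroup.subset_closure ⟨k, rfl⟩)
    let f : K →* K := MonoidHom.mk' (fun k => k⁻¹ * φ a k) (by
      intro g h
      have hc := Subgroup.mem_center_iff.mp (hcen g)
      calc (g * h)⁻¹ * φ a (g * h) = h⁻¹ * ((g⁻¹ * φ a g) * φ a h) := by
            simp [map_mul, mul_assoc]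
        _ = (g⁻¹ * φ a g) * (h⁻¹ * φ a h) := by
            rw [← mul_assoc, hc h⁻¹, mul_assoc]
      )
    have hker : ∀ k : K, f k = 1 := by
      have hcomm : commutator K ≤ f.ker := by
        rw [commutator_def, Subgroup.commutator_le]
        intro g _ h _
        have : f ⁅g, h⁆ = ⁅f g, f h⁆ := map_commutatorElement f g h
        rw [MonoidHom.mem_ker, this, commutatorElement_eq_one_iff_commute]
        show f g * f h = f h * f g
        exact (Subgroup.mem_center_iff.mp (hcen g) (f h)).symm
      rw [hqs.1] at hcomm
      intro k
      exact hcomm (Subgroup.mem_top k)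
    have : S ⊆ (⊥ : Subgroup K) := by
      rintro x ⟨k, rfl⟩
      simpa [f] using hker k
    exact le_bot_iff.mp ((Subgroup.closure_le _).mpr this)
  · -- N ⊔ center K = ⊤, so K/N is abelian; perfection gives N = ⊤
    right
    have hsup : N ⊔ Subgroup.center K = ⊤ := by
      have := congrArg (Subgroup.comap mk') htop
      rwa [Subgroup.comap_map_eq, hmk, QuotientGroup.ker_mk',
        Subgroup.comap_top] at this
    letI := hN
    set q : K →* K ⧸ N := QuotientGroup.mk' N with hq
    have hsurj : ∀ x : K ⧸ N, ∃ z ∈ Subgroup.center K, q z = x := by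
      intro x
      have hx : x ∈ (Subgroup.center K).map q := by
        have h1 : (N ⊔ Subgroup.center K).map q = ⊤ := by
          rw [hsup, Subgroup.map_top_of_surjective _ (QuotientGroup.mk'_surjective _)]
        have h2 : (N ⊔ Subgroup.center K).map q =
            N.map q ⊔ (Subgroup.center K).map q := Subgroup.map_sup _ _ _
        have h3 : N.map q = ⊥ := (Subgroup.map_eq_bot_iff _).mpr
          (by rw [hq, QuotientGroup.ker_mk'])
        have : (Subgroup.center K).map q = ⊤ := by
          rw [← h1, h2, h3, bot_sup_eq]
        rw [this]; trivial
      exact hx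
    have hcommN : ∀ g h : K, ⁅g, h⁆ ∈ N := by
      intro g h
      obtain ⟨z1, hz1, hzg⟩ := hsurj (q g)
      obtain ⟨z2, hz2, hzh⟩ := hsurj (q h)
      have : q ⁅g, h⁆ = 1 := by
        rw [map_commutatorElement, ← hzg, ← hzh, ← map_commutatorElement,
          commutatorElement_def]
        have := Subgroup.mem_center_iff.mp hz1 z2
        rw [← this]
        simp
      rwa [hq, ← MonoidHom.mem_ker, QuotientGroup.ker_mk'] at this
    have : commutator K ≤ N := by
      rw [commutator_def, Subgroup.commutator_le]
      intro g _ h _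
      exact hcommN g h
    rw [hqs.1] at this
    exact top_le_iff.mp this
end
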